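/- arXiv:1206.0505 — 5 statements merged into one kernel-verified Lean document; each statement's English description precedes it below -/
import Mathlib

section
/- For every integer r ≥ 1, the homomorphism from the free group F(d₁,d₂) to G_cd sending d₁, d₂ to the generators d₁, d₂ of G_cd is injective. In other words, F(d₁,d₂) is a subgroup of G_cd. -/
set_option linter.unusedSectionVars false
set_option linter.unusedVariables false
set_option maxHeartbeats 1000000

/-- The "progression word" `x y^(s+1) x y^(s+2) ⋯ x y^(s+r)` in a group. -/
def wordProg {G : Type*} [Group G] (x y : G) (s r : ℕ) : G :=
  ((List.range r).map (fun k => x * y ^ (s + k + 1))).prod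

namespace PingPongAux

open FreeGroup List

variable {α : Type*} [DecidableEq α]

def IsRed (L : List (α × Bool)) : Prop :=
  List.Chain' (fun x y => y ≠ (x.1, !x.2)) L

lemma IsRed.reduce_eq {L : List (α × Bool)} (h : IsRed L) : reduce L = L := by
  induction L with
  | nil => rfl
  | cons x L ih =>
    have hL : IsRed L := h.tail
    rw [reduce.cons, ih hL]
    cases L with
    | nil => rfl
    | cons y T =>
      have hxy : y ≠ (x.1, !x.2) := (List.isChain_cons_cons.1 h).1
      have : ¬ (x.1 = y.1 ∧ x.2 = !y.2) := by
        rintro ⟨h1, h2⟩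
        apply hxy
        ext
        · exact h1.symm
        · simp [h2]
      simp [this]

private lemma chain'_of_noCC :
    ∀ l : List (α × Bool), (∀ (l₁ : List (α × Bool)) x b l₂,
      l ≠ l₁ ++ (x, b) :: (x, !b) :: l₂) → IsRed l
  | [], _ => List.isChain_nil
  | [x], _ => List.isChain_singleton x
  | x :: y :: t, h => by
    refine List.isChain_cons_cons.2 ⟨?_, ?_⟩
    · intro hy
      exact h [] x.1 x.2 t (by rw [hy]; simp)
    · exact chain'_of_noCC (y :: t) (fun l₁ a b l₂ hl => h (x :: l₁) a b l₂ (by rw [hl]; simp))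

lemma isRed_reduce (L : List (α × Bool)) : IsRed (reduce L) :=
  chain'_of_noCC _ (fun l₁ x b l₂ hl => reduce.not hl)

lemma isRed_toWord (g : FreeGroup α) : IsRed g.toWord := by
  rcases g with ⟨L⟩
  exact isRed_reduce L

lemma IsRed.append {P Q : List (α × Bool)} (h1 : IsRed P) (h2 : IsRed Q)
    (hj : ∀ x ∈ P.getLast?, ∀ y ∈ Q.head?, y ≠ (x.1, !x.2)) : IsRed (P ++ Q) :=
  List.isChain_append.2 ⟨h1, h2, hj⟩

lemma IsRed.left_of_append {P Q : List (α × Bool)} (h : IsRed (P ++ Q)) : IsRed P :=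
  List.IsChain.left_of_append h

lemma IsRed.right_of_append {P Q : List (α × Bool)} (h : IsRed (P ++ Q)) : IsRed Q :=
  List.IsChain.right_of_append h

lemma isRed_of_pos {L : List (α × Bool)} (h : ∀ u ∈ L, u.2 = true) : IsRed L := by
  induction L with
  | nil => exact List.isChain_nil
  | cons x L ih =>
    cases L with
    | nil => exact List.isChain_singleton x
    | cons y T =>
      refine List.isChain_cons_cons.2 ⟨?_, ih (fun u hu => h u (List.mem_cons_of_mem x hu))⟩
      intro hy
      have hx : x.2 = true := h x (by simp)
      have hy2 : y.2 = true := h y (by simp)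
      rw [hy] at hy2
      simp [hx] at hy2

/-- one-step cancellation inside reduce -/
lemma reduce_middle_cancel (P : List (α × Bool)) (x : α × Bool) (S : List (α × Bool)) :
    reduce (P ++ x :: (x.1, !x.2) :: S) = reduce (P ++ S) := by
  have : Red.Step (P ++ (x.1, x.2) :: (x.1, !x.2) :: S) (P ++ S) := Red.Step.not
  simpa using reduce.Step.eq this

lemma invRev_append (L₁ L₂ : List (α × Bool)) :
    invRev (L₁ ++ L₂) = invRev L₂ ++ invRev L₁ := by
  simp [invRev]

lemma invRev_replicate (n : ℕ) (x : α × Bool) :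
    invRev (List.replicate n x) = List.replicate n (x.1, !x.2) := by
  simp [invRev, List.map_replicate, List.reverse_replicate]

lemma invRev_singleton (x : α × Bool) : invRev [x] = [(x.1, !x.2)] := by
  simp [invRev]

/-- cancelling equal powers in the middle -/
lemma reduce_pow_cancel (Z T : List (α × Bool)) (x : α × Bool) :
    ∀ m n, m ≤ n →
    reduce (Z ++ List.replicate n x ++ List.replicate m (x.1, !x.2) ++ T) =
      reduce (Z ++ List.replicate (n - m) x ++ T) := by
  intro m
  induction m with
  | zero => intro n _; simp
  | succ m ih =>
    intro n hn
    obtain ⟨n', rfl⟩ : ∃ n', n = n' + 1 := ⟨n - 1, by omega⟩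
    have key : Z ++ List.replicate (n' + 1) x ++ List.replicate (m + 1) (x.1, !x.2) ++ T =
        (Z ++ List.replicate n' x) ++ x :: (x.1, !x.2) :: (List.replicate m (x.1, !x.2) ++ T) := by
      rw [List.replicate_succ' (n := n'), List.replicate_succ (n := m)]
      simp [List.append_assoc]
    rw [key, reduce_middle_cancel, show n' + 1 - (m + 1) = n' - m by omega]
    rw [← ih n' (by omega)]
    congr 1
    simp [List.append_assoc]

/-- Maximal cancellation decomposition of the product of two reduced words. -/
lemma cancel_decomp :
    ∀ (W L : List (α × Bool)), IsRed W → IsRed L →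
      ∃ n L₂, n ≤ W.length ∧ L = invRev (W.drop n) ++ L₂ ∧
        reduce (W ++ L) = W.take n ++ L₂ := by
  intro W
  induction W using List.reverseRecOn with
  | nil =>
    intro L _ hL
    exact ⟨0, L, by simp [hL.reduce_eq, invRev]⟩
  | append_singleton W' x ih =>
    intro L hW hL
    cases L with
    | nil =>
      refine ⟨W'.length + 1, [], by simp, ?_, ?_⟩
      · simp [invRev]
      · simpa [List.take_append, List.take_of_length_le] using hW.reduce_eq
    | cons y L' =>
      by_cases hy : y = (x.1, !x.2)
      · subst hy
        have h1 : reduce ((W' ++ [x]) ++ (x.1, !x.2) :: L') = reduce (W' ++ L') := by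
          have := reduce_middle_cancel W' x L'
          simpa [List.append_assoc] using this
        obtain ⟨n, L₂, hn, hL', hred⟩ := ih L' hW.left_of_append hL.tail
        refine ⟨n, L₂, by simp; omega, ?_, ?_⟩
        · rw [List.drop_append_of_le_length hn, invRev_append, invRev_singleton]
          simp [hL']
        · rw [h1, hred, List.take_append_of_le_length hn]
      · -- no cancellation at the junction: whole thing reduced
        have hred : IsRed ((W' ++ [x]) ++ y :: L') := by
          refine hW.append hL ?_
          intro u hu v hv
          simp at hu hv
          subst hu; subst hv
          exact hy
        exact ⟨W'.length + 1, y :: L', by simp, by simp [invRev], by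
          simpa [List.take_append, List.take_of_length_le] using hred.reduce_eq⟩


lemma toWord_mk_mul (L : List (α × Bool)) (g : FreeGroup α) :
    (mk L * g).toWord = reduce (L ++ g.toWord) := by
  conv_lhs => rw [← mk_toWord (x := g), mul_mk]
  exact toWord_mk

/-! ### Specialized to two generators -/

/-- block `d₁ d₂^(s+k+1)` as a word -/
def Wblk (s k : ℕ) : List (Fin 2 × Bool) :=
  ((0 : Fin 2), true) :: List.replicate (s + k + 1) ((1 : Fin 2), true)

/-- word of the progression `D = (d₁d₂^(s+1))⋯(d₁d₂^(s+r))` -/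
def Wlist (s r : ℕ) : List (Fin 2 × Bool) :=
  (List.range r).flatMap (Wblk s)

lemma Wblk_length (s k : ℕ) : (Wblk s k).length = s + k + 2 := by
  simp [Wblk]

lemma Wlist_succ (s r : ℕ) : Wlist s (r + 1) = Wlist s r ++ Wblk s r := by
  simp [Wlist, List.range_succ]

lemma Wlist_pos (s r : ℕ) : ∀ u ∈ Wlist s r, u.2 = true := by
  intro u hu
  simp only [Wlist, List.mem_flatMap, Wblk] at hu
  obtain ⟨k, _, hk⟩ := hu
  rcases List.mem_cons.1 hk with h | h
  · rw [h]
  · exact (List.eq_of_mem_replicate h) ▸ rfl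

lemma isRed_Wlist (s r : ℕ) : IsRed (Wlist s r) := isRed_of_pos (Wlist_pos s r)

lemma mk_Wblk (s k : ℕ) :
    FreeGroup.mk (Wblk s k) = FreeGroup.of (0 : Fin 2) * FreeGroup.of (1 : Fin 2) ^ (s + k + 1) := by
  have h1 : FreeGroup.of (0 : Fin 2) = FreeGroup.mk [((0 : Fin 2), true)] := by
    rw [← mk_toWord (x := FreeGroup.of (0 : Fin 2)), toWord_of]
  have h2 : FreeGroup.of (1 : Fin 2) ^ (s + k + 1) =
      FreeGroup.mk (List.replicate (s + k + 1) ((1 : Fin 2), true)) := by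
    rw [← mk_toWord (x := FreeGroup.of (1 : Fin 2) ^ (s + k + 1)), toWord_of_pow]
  rw [h1, h2, mul_mk]
  rfl

lemma wordProg_eq_mk (s r : ℕ) :
    wordProg (FreeGroup.of (0 : Fin 2)) (FreeGroup.of (1 : Fin 2)) s r =
      FreeGroup.mk (Wlist s r) := by
  induction r with
  | zero => simp [wordProg, Wlist]; rfl
  | succ r ih =>
    rw [wordProg, List.range_succ, List.map_append, List.prod_append, ← wordProg]
    rw [ih, Wlist_succ, ← mul_mk, mk_Wblk]
    simp

lemma toWord_mk_Wlist (s r : ℕ) :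
    (FreeGroup.mk (Wlist s r)).toWord = Wlist s r := by
  rw [toWord_mk, (isRed_Wlist s r).reduce_eq]

lemma Wlist_one (s r : ℕ) (hr : 1 ≤ r) : ∃ T, Wlist s r = Wblk s 0 ++ T := by
  induction r with
  | zero => omega
  | succ r ih =>
    rcases Nat.eq_or_lt_of_le hr with h | h
    · refine ⟨[], ?_⟩
      have : r = 0 := by omega
      subst this
      simp [Wlist, List.range_succ]
    · obtain ⟨T, hT⟩ := ih (by omega)
      exact ⟨T ++ Wblk s r, by rw [Wlist_succ, hT, List.append_assoc]⟩

lemma Wlist_two (s r : ℕ) (hr : 2 ≤ r) :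
    ∃ T, Wlist s r = Wblk s 0 ++ ((0 : Fin 2), true) :: T := by
  induction r with
  | zero => omega
  | succ r ih =>
    rcases Nat.eq_or_lt_of_le hr with h | h
    · refine ⟨List.replicate (s + 2) ((1 : Fin 2), true), ?_⟩
      have : r = 1 := by omega
      subst this
      simp [Wlist, List.range_succ, Wblk]
    · obtain ⟨T, hT⟩ := ih (by omega)
      exact ⟨T ++ Wblk s r, by rw [Wlist_succ, hT]; simp⟩

lemma Wlist_last (s r : ℕ) (hr : 1 ≤ r) :
    ∃ T, Wlist s r = T ++ [((1 : Fin 2), true)] := by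
  obtain ⟨r', rfl⟩ : ∃ r', r = r' + 1 := ⟨r - 1, by omega⟩
  refine ⟨Wlist s r' ++ (((0 : Fin 2), true) :: List.replicate (s + r') ((1 : Fin 2), true)), ?_⟩
  rw [Wlist_succ]
  simp [Wblk, List.replicate_succ' (n := s + r')]

variable (p r : ℕ)

/-- the head of the second word: `d₁ d₂^(p+r+1)⋯`; its first block is the prefix test. -/
def X2 : Set (FreeGroup (Fin 2)) := {g | Wblk (p + r) 0 <+: g.toWord}

def X1 : Set (FreeGroup (Fin 2)) :=
  {g | g.toWord.head? = some ((0 : Fin 2), true) ∧ ¬ Wblk (p + r) 0 <+: g.toWord}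

/-- M1 : anything which looks like `d₁ b^(p+1) d₁ ⋯` near the start fails the X2 prefix test -/
lemma notX2pref (hr : 1 ≤ r) (R : List (Fin 2 × Bool))
    (hR : R.take (p + 3) = Wblk p 0 ++ [((0 : Fin 2), true)]) :
    ¬ Wblk (p + r) 0 <+: R := by
  intro hpref
  have hlen : (Wblk (p + r) 0).length = p + r + 2 := Wblk_length _ _
  have h1 : Wblk (p + r) 0 = R.take (p + r + 2) := by
    rw [← hlen]; exact List.prefix_iff_eq_take.1 hpref
  have h2 : R.take (p + 3) = (Wblk (p + r) 0).take (p + 3) := by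
    rw [h1, List.take_take, min_eq_left (by omega)]
  rw [hR] at h2
  have h3 : (Wblk (p + r) 0).take (p + 3) =
      ((0 : Fin 2), true) :: List.replicate (p + 2) ((1 : Fin 2), true) := by
    show (((0 : Fin 2), true) :: List.replicate (p + r + 0 + 1) ((1 : Fin 2), true)).take (p + 3) = _
    rw [show p + 3 = (p + 2) + 1 from rfl, List.take_succ_cons,
      List.take_replicate, min_eq_left (by omega)]
  rw [h3] at h2
  -- compare getLast?
  have := congrArg List.getLast? h2
  rw [List.getLast?_concat] at this
  rw [show ((0 : Fin 2), true) :: List.replicate (p + 2) ((1 : Fin 2), true) =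
      (((0 : Fin 2), true) :: List.replicate (p + 1) ((1 : Fin 2), true)) ++ [((1 : Fin 2), true)]
    by simp [List.replicate_succ' (n := p + 1)], List.getLast?_concat] at this
  simp at this

lemma take_p3_Wlist (hr : 2 ≤ r) :
    (Wlist p r).take (p + 3) = Wblk p 0 ++ [((0 : Fin 2), true)] := by
  obtain ⟨T, hT⟩ := Wlist_two p r hr
  rw [hT, show p + 3 = (Wblk p 0).length + 1 by simp [Wblk_length], List.take_append]
  simp


lemma X1_intro (hr : 1 ≤ r) (g : FreeGroup (Fin 2))
    (h1 : g.toWord.head? = some ((0 : Fin 2), true))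
    (h2 : g.toWord.take (p + 3) = Wblk p 0 ++ [((0 : Fin 2), true)]) : g ∈ X1 p r :=
  ⟨h1, notX2pref p r hr _ h2⟩

lemma X2_head (g : FreeGroup (Fin 2)) (hg : g ∈ X2 p r) :
    g.toWord.head? = some ((0 : Fin 2), true) := by
  obtain ⟨t, ht⟩ := hg
  rw [← ht]
  rfl

/-- no cancellation when `g` starts with `d₁` -/
lemma mul_head_pos (s' : ℕ) (hr : 1 ≤ r) (g : FreeGroup (Fin 2))
    (hg : g.toWord.head? = some ((0 : Fin 2), true)) :
    (FreeGroup.mk (Wlist s' r) * g).toWord = Wlist s' r ++ g.toWord := by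
  rw [toWord_mk_mul]
  refine IsRed.reduce_eq (IsRed.append (isRed_Wlist s' r) (isRed_toWord g) ?_)
  intro x hx y hy
  obtain ⟨T, hT⟩ := Wlist_last s' r hr
  rw [hT, List.getLast?_concat, Option.mem_def, Option.some_inj] at hx
  rw [Option.mem_def, hg, Option.some_inj] at hy
  subst hx; subst hy
  simp

lemma length_Wlist_ge (hr : 2 ≤ r) : p + 3 ≤ (Wlist p r).length := by
  obtain ⟨T, hT⟩ := Wlist_two p r hr
  rw [hT, List.length_append, Wblk_length, List.length_cons]
  omega

lemma head_Wlist (hr : 1 ≤ r) (s' : ℕ) :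
    (Wlist s' r).head? = some ((0 : Fin 2), true) := by
  obtain ⟨T, hT⟩ := Wlist_one s' r hr
  rw [hT]
  rfl

lemma D1_mem_X1 (hr : 2 ≤ r) : FreeGroup.mk (Wlist p r) ∈ X1 p r := by
  refine X1_intro p r (Nat.one_le_of_lt hr) _ ?_ ?_ <;> rw [toWord_mk_Wlist]
  · exact head_Wlist r (Nat.one_le_of_lt hr) p
  · exact take_p3_Wlist p r hr

lemma D2_mem_X2 (hr : 1 ≤ r) : FreeGroup.mk (Wlist (p + r) r) ∈ X2 p r := by
  obtain ⟨T, hT⟩ := Wlist_one (p + r) r hr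
  show Wblk (p + r) 0 <+: _
  rw [toWord_mk_Wlist, hT]
  exact List.prefix_append _ _

/-- the `X1` route -/
lemma X1_route (hr : 2 ≤ r) (n : ℕ) (L₂ : List (Fin 2 × Bool)) (hn : p + 3 ≤ n)
    (g : FreeGroup (Fin 2))
    (hred : (FreeGroup.mk (Wlist p r) * g).toWord = (Wlist p r).take n ++ L₂) :
    FreeGroup.mk (Wlist p r) * g ∈ X1 p r := by
  refine X1_intro p r (by omega) _ ?_ ?_ <;> rw [hred]
  · obtain ⟨T, hT⟩ := Wlist_two p r hr
    obtain ⟨n', rfl⟩ : ∃ n', n = n' + 1 := ⟨n - 1, by omega⟩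
    rw [hT]
    show ((((0 : Fin 2), true) :: (List.replicate (p + 0 + 1) ((1 : Fin 2), true) ++
      (((0 : Fin 2), true) :: T))).take (n' + 1) ++ L₂).head? = _
    rw [List.take_succ_cons]
    rfl
  · rw [List.take_append, List.length_take]
    have h1 : p + 3 - min n (Wlist p r).length = 0 ∨ p + 3 ≤ min n (Wlist p r).length := by
      rcases le_or_gt n (Wlist p r).length with h | h
      · right; omega
      · rw [min_eq_right (by omega)]
        have := length_Wlist_ge p r hr
        right; omega
    have h2 : p + 3 ≤ min n (Wlist p r).length := by
      rcases le_or_gt n (Wlist p r).length with h | h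
      · omega
      · rw [min_eq_right (by omega)]; exact length_Wlist_ge p r hr
    rw [show p + 3 - min n (Wlist p r).length = 0 by omega, List.take_zero, List.append_nil,
      List.take_take, min_eq_left (by omega), take_p3_Wlist p r hr]

/-- the `X2` route : `g` starts with `d₂^{-(p+r)} d₁⁻¹` -/
lemma X2_route (hr : 2 ≤ r) (g : FreeGroup (Fin 2)) (T : List (Fin 2 × Bool))
    (hg : g.toWord = List.replicate (p + r) ((1 : Fin 2), false) ++ ((0 : Fin 2), false) :: T) :
    FreeGroup.mk (Wlist (p + r) r) * g ∈ X2 p r := by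
  obtain ⟨r', rfl⟩ : ∃ r', r = r' + 1 := ⟨r - 1, by omega⟩
  have hr' : 1 ≤ r' := by omega
  show Wblk (p + (r' + 1)) 0 <+: _
  rw [toWord_mk_mul, hg, Wlist_succ]
  have hkey : (Wlist (p + (r' + 1)) r' ++ Wblk (p + (r' + 1)) r') ++
      (List.replicate (p + (r' + 1)) ((1 : Fin 2), false) ++ ((0 : Fin 2), false) :: T) =
      (Wlist (p + (r' + 1)) r' ++ [((0 : Fin 2), true)]) ++
        List.replicate (p + (r' + 1) + r' + 1) ((1 : Fin 2), true) ++
        List.replicate (p + (r' + 1)) (((1 : Fin 2), true).1, !((1 : Fin 2), true).2) ++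
        (((0 : Fin 2), false) :: T) := by
    show _ = (Wlist (p + (r' + 1)) r' ++ [((0 : Fin 2), true)]) ++
        List.replicate (p + (r' + 1) + r' + 1) ((1 : Fin 2), true) ++
        List.replicate (p + (r' + 1)) ((1 : Fin 2), false) ++ (((0 : Fin 2), false) :: T)
    simp [Wblk, List.append_assoc]
  rw [hkey, reduce_pow_cancel _ _ ((1 : Fin 2), true) _ _ (by omega)]
  rw [show p + (r' + 1) + r' + 1 - (p + (r' + 1)) = r' + 1 by omega]
  have hfin : IsRed ((Wlist (p + (r' + 1)) r' ++ [((0 : Fin 2), true)]) ++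
      List.replicate (r' + 1) ((1 : Fin 2), true) ++ (((0 : Fin 2), false) :: T)) := by
    refine IsRed.append (IsRed.append ?_ ?_ ?_) ?_ ?_
    · exact isRed_of_pos (by
        intro u hu
        rcases List.mem_append.1 hu with h | h
        · exact Wlist_pos _ _ u h
        · simp at h; rw [h])
    · exact isRed_of_pos (fun u hu => by rw [List.eq_of_mem_replicate hu])
    · intro x hx y hy
      rw [Option.mem_def, List.getLast?_concat, Option.some_inj] at hx
      rw [Option.mem_def, show List.replicate (r' + 1) ((1 : Fin 2), true) =
        ((1 : Fin 2), true) :: List.replicate r' ((1 : Fin 2), true) from rfl,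
        List.head?_cons, Option.some_inj] at hy
      subst hx; subst hy
      simp
    · have : g.toWord = (List.replicate (p + (r' + 1)) ((1 : Fin 2), false)) ++
          (((0 : Fin 2), false) :: T) := hg
      exact IsRed.right_of_append (this ▸ isRed_toWord g)
    · intro x hx y hy
      have hre : Wlist (p + (r' + 1)) r' ++ [((0 : Fin 2), true)] ++
          List.replicate (r' + 1) ((1 : Fin 2), true) =
          (Wlist (p + (r' + 1)) r' ++ [((0 : Fin 2), true)] ++
            List.replicate r' ((1 : Fin 2), true)) ++ [((1 : Fin 2), true)] := by
        rw [List.replicate_succ' (n := r')]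
        simp [List.append_assoc]
      rw [Option.mem_def, hre, List.getLast?_concat, Option.some_inj] at hx
      rw [Option.mem_def, List.head?_cons, Option.some_inj] at hy
      subst hx; subst hy
      simp
  rw [hfin.reduce_eq]
  obtain ⟨T', hT'⟩ := Wlist_one (p + (r' + 1)) r' hr'
  rw [hT']
  simp only [List.append_assoc]
  exact List.prefix_append _ _



/-- The key disjunction: for every `g`, either `D₁ g ∈ X1` or `D₂ g ∈ X2`. -/
lemma main_disj (p r : ℕ) (hr : 2 ≤ r) (g : FreeGroup (Fin 2)) :
    FreeGroup.mk (Wlist p r) * g ∈ X1 p r ∨ FreeGroup.mk (Wlist (p + r) r) * g ∈ X2 p r := by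
  obtain ⟨n, L₂, hn, hL, hred⟩ :=
    cancel_decomp (Wlist p r) g.toWord (isRed_Wlist p r) (isRed_toWord g)
  by_cases hcase : p + 3 ≤ n
  · left
    exact X1_route p r hr n L₂ hcase g (by rw [toWord_mk_mul, hred])
  · right
    push_neg at hcase
    obtain ⟨r', rfl⟩ : ∃ r', r = r' + 1 := ⟨r - 1, by omega⟩
    have hr' : 1 ≤ r' := by omega
    have hW : Wlist p (r' + 1) = Wlist p r' ++
        (((0 : Fin 2), true) :: List.replicate (p + r' + 1) ((1 : Fin 2), true)) := by
      rw [Wlist_succ]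
      rfl
    have hfront : p + 2 ≤ (Wlist p r').length := by
      obtain ⟨T, hT⟩ := Wlist_one p r' hr'
      rw [hT, List.length_append, Wblk_length]
      omega
    have hdrop : (Wlist p (r' + 1)).drop n = (Wlist p r').drop n ++
        (((0 : Fin 2), true) :: List.replicate (p + r' + 1) ((1 : Fin 2), true)) := by
      rw [hW, List.drop_append_of_le_length (by omega)]
    rw [hdrop, invRev_append] at hL
    have hinv : invRev (((0 : Fin 2), true) :: List.replicate (p + r' + 1) ((1 : Fin 2), true)) =
        List.replicate (p + (r' + 1)) ((1 : Fin 2), false) ++ [((0 : Fin 2), false)] := by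
      rw [show ((0 : Fin 2), true) :: List.replicate (p + r' + 1) ((1 : Fin 2), true) =
        [((0 : Fin 2), true)] ++ List.replicate (p + r' + 1) ((1 : Fin 2), true) from rfl,
        invRev_append, invRev_replicate, invRev_singleton]
      norm_num
      rw [show p + (r' + 1) = p + r' + 1 by omega]
    rw [hinv] at hL
    refine X2_route p (r' + 1) hr g (invRev ((Wlist p r').drop n) ++ L₂) ?_
    rw [hL]
    simp [List.append_assoc]

/-- The ping-pong argument, for `r ≥ 2`. -/
theorem prog_injective_ge2 (p r : ℕ) (hr : 2 ≤ r) :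
    Function.Injective (FreeGroup.lift (fun j : Fin 2 =>
      FreeGroup.mk (Wlist (p + r * j.val) r))) := by
  set a : Fin 2 → FreeGroup (Fin 2) := fun j => FreeGroup.mk (Wlist (p + r * j.val) r) with ha
  have ha0 : a 0 = FreeGroup.mk (Wlist p r) := by simp [ha]
  have ha1 : a 1 = FreeGroup.mk (Wlist (p + r) r) := by simp [ha]
  set X : Fin 2 → Set (FreeGroup (Fin 2)) :=
    fun j => if j = 0 then X1 p r else X2 p r with hX
  set Y : Fin 2 → Set (FreeGroup (Fin 2)) := fun j => {g | a j * g ∉ X j} with hY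
  have hd12 : Disjoint (X1 p r) (X2 p r) := by
    rw [Set.disjoint_left]
    rintro g ⟨_, hg2⟩ hg'
    exact hg2 hg'
  have hmemX : ∀ j (g : FreeGroup (Fin 2)), g ∈ X j →
      g.toWord.head? = some ((0 : Fin 2), true) := by
    intro j g hg
    rcases eq_or_ne j 0 with h | h
    · rw [hX] at hg; simp [h] at hg; exact hg.1
    · rw [hX] at hg; simp [h] at hg; exact X2_head p r g hg
  have hstep : ∀ j (g : FreeGroup (Fin 2)),
      g.toWord.head? = some ((0 : Fin 2), true) → a j * g ∈ X j := by
    intro j g hg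
    rcases eq_or_ne j 0 with h | h
    · subst h
      have hmul := mul_head_pos r p (by omega) g hg
      rw [hX]
      simp only [if_pos rfl]
      rw [ha0]
      refine X1_intro p r (by omega) _ ?_ ?_ <;> rw [hmul]
      · obtain ⟨T, hT⟩ := Wlist_two p r hr
        rw [hT]
        rfl
      · rw [List.take_append_of_le_length (length_Wlist_ge p r hr)]
        exact take_p3_Wlist p r hr
    · have h1 : j = 1 := by omega
      subst h1
      have hmul := mul_head_pos r (p + r) (by omega) g hg
      rw [hX]
      simp only [if_neg h]
      rw [ha1]
      show Wblk (p + r) 0 <+: _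
      rw [hmul]
      obtain ⟨T, hT⟩ := Wlist_one (p + r) r (by omega)
      rw [hT]
      simp only [List.append_assoc]
      exact List.prefix_append _ _
  refine FreeGroup.injective_lift_of_ping_pong a X Y ?_ ?_ ?_ ?_ ?_ ?_
  · -- nonempty
    intro j
    rcases eq_or_ne j 0 with h | h
    · subst h
      exact ⟨_, by rw [hX]; simp only [if_pos rfl]; exact D1_mem_X1 p r hr⟩
    · have h1 : j = 1 := by omega
      subst h1
      exact ⟨_, by rw [hX]; simp only [if_neg h]; exact D2_mem_X2 p r (by omega)⟩
  · -- X pairwise disjoint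
    intro i j hij
    rcases eq_or_ne i 0 with h | h
    · have hj : j = 1 := by omega
      subst h; subst hj
      simpa [hX, Function.onFun] using hd12
    · have hi : i = 1 := by omega
      have hj : j = 0 := by omega
      subst hi; subst hj
      simpa [hX, Function.onFun] using hd12.symm
  · -- Y pairwise disjoint
    intro i j hij
    show _root_.Disjoint (Y i) (Y j)
    rw [Set.disjoint_left]
    intro g hgi hgj
    have key := main_disj p r hr g
    rcases eq_or_ne i 0 with h | h
    · have hj : j = 1 := by omega
      subst h; subst hj
      rw [hY] at hgi hgj
      simp only [Set.mem_setOf_eq, hX, if_pos rfl, if_neg one_ne_zero, ha0, ha1] at hgi hgj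
      tauto
    · have hi : i = 1 := by omega
      have hj : j = 0 := by omega
      subst hi; subst hj
      rw [hY] at hgi hgj
      simp only [Set.mem_setOf_eq, hX, if_pos rfl, if_neg one_ne_zero, ha0, ha1] at hgi hgj
      tauto
  · -- X i disjoint from Y j
    intro i j
    show _root_.Disjoint (X i) (Y j)
    rw [Set.disjoint_left]
    intro g hgi hgj
    rw [hY] at hgj
    exact hgj (hstep j g (hmemX i g hgi))
  · -- a i • (Y i)ᶜ ⊆ X i
    intro i x hx
    obtain ⟨g, hg, rfl⟩ := hx
    rw [Set.mem_compl_iff, hY, Set.mem_setOf_eq, not_not] at hg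
    show a i • g ∈ X i
    rwa [smul_eq_mul]
  · -- (a i)⁻¹ • (X i)ᶜ ⊆ Y i
    intro i x hx
    obtain ⟨g, hg, rfl⟩ := hx
    show a⁻¹ i • g ∈ Y i
    rw [smul_eq_mul, hY, Pi.inv_apply]
    simp only [Set.mem_setOf_eq, mul_inv_cancel_left]
    exact hg

/-- `r = 1`: the lift has an explicit left inverse. -/
theorem prog_injective_one (p : ℕ) :
    Function.Injective (FreeGroup.lift (fun j : Fin 2 =>
      wordProg (FreeGroup.of (0 : Fin 2)) (FreeGroup.of (1 : Fin 2)) (p + j.val) 1)) := by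
  set c : FreeGroup (Fin 2) := (FreeGroup.of (0 : Fin 2))⁻¹ * FreeGroup.of (1 : Fin 2) with hc
  set ψ : FreeGroup (Fin 2) →* FreeGroup (Fin 2) := FreeGroup.lift
    (fun j : Fin 2 => if j = 0 then FreeGroup.of (0 : Fin 2) * (c ^ (p + 1))⁻¹ else c) with hψ
  set φ : FreeGroup (Fin 2) →* FreeGroup (Fin 2) := FreeGroup.lift (fun j : Fin 2 =>
      wordProg (FreeGroup.of (0 : Fin 2)) (FreeGroup.of (1 : Fin 2)) (p + j.val) 1) with hφ
  have hprog : ∀ s : ℕ, wordProg (FreeGroup.of (0 : Fin 2)) (FreeGroup.of (1 : Fin 2)) s 1 =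
      FreeGroup.of (0 : Fin 2) * FreeGroup.of (1 : Fin 2) ^ (s + 1) := by
    intro s
    simp [wordProg, List.range_succ]
  have hif0 : ψ (FreeGroup.of (0 : Fin 2)) = FreeGroup.of (0 : Fin 2) * (c ^ (p + 1))⁻¹ := by
    rw [hψ, FreeGroup.lift_apply_of, if_pos rfl]
  have hif1 : ψ (FreeGroup.of (1 : Fin 2)) = c := by
    rw [hψ, FreeGroup.lift_apply_of, if_neg one_ne_zero]
  have hcomp : ∀ x, ψ (φ x) = x := by
    have : ψ.comp φ = MonoidHom.id (FreeGroup (Fin 2)) := by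
      apply FreeGroup.ext_hom
      intro j
      rw [MonoidHom.coe_comp, Function.comp_apply, MonoidHom.id_apply, hφ,
        FreeGroup.lift_apply_of, hprog, _root_.map_mul, _root_.map_pow, hif0, hif1]
      rcases eq_or_ne j 0 with h | h
      · subst h
        rw [show p + ((0 : Fin 2) : ℕ) + 1 = p + 1 by simp, inv_mul_cancel_right]
      · have h1 : j = 1 := by omega
        subst h1
        rw [show p + ((1 : Fin 2) : ℕ) + 1 = (p + 1) + 1 by simp, pow_succ c (p + 1),
          ← mul_assoc, inv_mul_cancel_right, hc, mul_inv_cancel_left]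
    intro x
    exact DFunLike.congr_fun this x
  intro x y hxy
  have := congrArg ψ hxy
  rwa [hcomp, hcomp] at this

/-- Master injectivity lemma. -/
theorem prog_injective (p r : ℕ) (hr : 1 ≤ r) :
    Function.Injective (FreeGroup.lift (fun j : Fin 2 =>
      wordProg (FreeGroup.of (0 : Fin 2)) (FreeGroup.of (1 : Fin 2)) (p + r * j.val) r)) := by
  rcases eq_or_lt_of_le hr with h1 | h2
  · have : (fun j : Fin 2 => wordProg (FreeGroup.of (0 : Fin 2)) (FreeGroup.of (1 : Fin 2))
        (p + r * j.val) r) = (fun j : Fin 2 => wordProg (FreeGroup.of (0 : Fin 2))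
        (FreeGroup.of (1 : Fin 2)) (p + j.val) 1) := by
      funext j
      rw [← h1]
      ring_nf
    rw [this]
    exact prog_injective_one p
  · have : (fun j : Fin 2 => wordProg (FreeGroup.of (0 : Fin 2)) (FreeGroup.of (1 : Fin 2))
        (p + r * j.val) r) = (fun j : Fin 2 => FreeGroup.mk (Wlist (p + r * j.val) r)) := by
      funext j
      exact wordProg_eq_mk _ _
    rw [this]
    exact prog_injective_ge2 p r h2

end PingPongAux


/-! ### Assembly: the double HNN extension -/

noncomputable section GcdAssembly

namespace GcdAssembly

open PingPongAux

lemma map_wordProg {G H : Type*} [Group G] [Group H] (f : G →* H) (x y : G) (s r : ℕ) :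
    f (wordProg x y s r) = wordProg (f x) (f y) s r := by
  unfold wordProg
  rw [f.map_list_prod, List.map_map]
  congr 1
  apply List.map_congr_left
  intro k _
  simp [map_mul, map_pow]

variable (r : ℕ)

/-- `φm r m : d_j ↦ (d₁ d₂^(rm+rj+1))⋯(d₁ d₂^(rm+rj+r))` -/
def φm (m : ℕ) : FreeGroup (Fin 2) →* FreeGroup (Fin 2) :=
  FreeGroup.lift (fun j : Fin 2 => wordProg (FreeGroup.of 0) (FreeGroup.of 1)
    (r * m + r * j.val) r)

lemma φm_inj (hr : 1 ≤ r) (m : ℕ) : Function.Injective (φm r m) :=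
  prog_injective (r * m) r hr

def E1 (hr : 1 ≤ r) : (⊤ : Subgroup (FreeGroup (Fin 2))) ≃* (φm r 3).range :=
  (Subgroup.topEquiv).trans (MonoidHom.ofInjective (φm_inj r hr 3))

abbrev G1 (hr : 1 ≤ r) := HNNExtension (FreeGroup (Fin 2)) ⊤ (φm r 3).range (E1 r hr)

def of1 (hr : 1 ≤ r) : FreeGroup (Fin 2) →* G1 r hr := HNNExtension.of

lemma of1_inj (hr : 1 ≤ r) : Function.Injective (of1 r hr) :=
  HNNExtension.of_injective (E1 r hr)

def ψ2 (hr : 1 ≤ r) : FreeGroup (Fin 2) →* G1 r hr := (of1 r hr).comp (φm r 5)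

lemma ψ2_inj (hr : 1 ≤ r) : Function.Injective (ψ2 r hr) :=
  (of1_inj r hr).comp (φm_inj r hr 5)

def E2 (hr : 1 ≤ r) : (of1 r hr).range ≃* (ψ2 r hr).range :=
  (MonoidHom.ofInjective (of1_inj r hr)).symm.trans (MonoidHom.ofInjective (ψ2_inj r hr))

abbrev G2 (hr : 1 ≤ r) := HNNExtension (G1 r hr) (of1 r hr).range (ψ2 r hr).range (E2 r hr)

def of2 (hr : 1 ≤ r) : G1 r hr →* G2 r hr := HNNExtension.of

lemma of2_inj (hr : 1 ≤ r) : Function.Injective (of2 r hr) :=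
  HNNExtension.of_injective (E2 r hr)

def emb (hr : 1 ≤ r) : FreeGroup (Fin 2) →* G2 r hr := (of2 r hr).comp (of1 r hr)

lemma emb_inj (hr : 1 ≤ r) : Function.Injective (emb r hr) := (of2_inj r hr).comp (of1_inj r hr)

lemma conj1 (hr : 1 ≤ r) (x : FreeGroup (Fin 2)) :
    (HNNExtension.t : G1 r hr) * of1 r hr x * (HNNExtension.t : G1 r hr)⁻¹ =
      of1 r hr (φm r 3 x) := by
  have h := HNNExtension.equiv_eq_conj (φ := E1 r hr) (⟨x, trivial⟩ : (⊤ : Subgroup _))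
  have hcoe : ((E1 r hr ⟨x, trivial⟩ : (φm r 3).range) : FreeGroup (Fin 2)) = φm r 3 x := by
    rw [E1, MulEquiv.trans_apply]
    rw [show (Subgroup.topEquiv ⟨x, trivial⟩ : FreeGroup (Fin 2)) = x from rfl]
    exact MonoidHom.ofInjective_apply (φm_inj r hr 3)
  rw [hcoe] at h
  exact h.symm

lemma conj2 (hr : 1 ≤ r) (x : FreeGroup (Fin 2)) :
    (HNNExtension.t : G2 r hr) * of2 r hr (of1 r hr x) * (HNNExtension.t : G2 r hr)⁻¹ =
      of2 r hr (of1 r hr (φm r 5 x)) := by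
  have hmem : of1 r hr x ∈ (of1 r hr).range := ⟨x, rfl⟩
  have h := HNNExtension.equiv_eq_conj (φ := E2 r hr) (⟨of1 r hr x, hmem⟩ : (of1 r hr).range)
  have hsymm : (MonoidHom.ofInjective (of1_inj r hr)).symm ⟨of1 r hr x, hmem⟩ = x := by
    apply (MonoidHom.ofInjective (of1_inj r hr)).injective
    rw [MulEquiv.apply_symm_apply]
    exact Subtype.ext (MonoidHom.ofInjective_apply (of1_inj r hr)).symm
  have hcoe : ((E2 r hr ⟨of1 r hr x, hmem⟩ : (ψ2 r hr).range) : G1 r hr) =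
      of1 r hr (φm r 5 x) := by
    rw [E2, MulEquiv.trans_apply, hsymm]
    exact MonoidHom.ofInjective_apply (ψ2_inj r hr)
  rw [hcoe] at h
  exact h.symm

/-- images of the four generators of `G_cd` -/
def θfun (hr : 1 ≤ r) : Fin 4 → G2 r hr := fun i =>
  if i.val = 0 then (of2 r hr (HNNExtension.t : G1 r hr))⁻¹
  else if i.val = 1 then (HNNExtension.t : G2 r hr)⁻¹
  else if i.val = 2 then emb r hr (FreeGroup.of 0)
  else emb r hr (FreeGroup.of 1)

end GcdAssembly

end GcdAssembly


/-- Generators of `G_cd`: `0 = c₁`, `1 = c₂`, `2 = d₁`, `3 = d₂`.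
The relators are `cᵢ⁻¹ d_j cᵢ D_{ij}⁻¹` for `1 ≤ i,j ≤ 2`, where
`D_{ij} = (d₁d₂^{r(2i+j)+1})(d₁d₂^{r(2i+j)+2})⋯(d₁d₂^{r(2i+j)+r})`. -/
def cdRels (r : ℕ) : Set (FreeGroup (Fin 4)) :=
  { w | ∃ i j : Fin 2,
      w = (FreeGroup.of (⟨i.val, by omega⟩ : Fin 4))⁻¹ *
          FreeGroup.of (⟨j.val + 2, by omega⟩ : Fin 4) *
          FreeGroup.of (⟨i.val, by omega⟩ : Fin 4) *
          (wordProg (FreeGroup.of (2 : Fin 4)) (FreeGroup.of (3 : Fin 4))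
            (r * (2 * (i.val + 1) + (j.val + 1))) r)⁻¹ }

/-- `G_cd = ⟨c₁,c₂,d₁,d₂ ∣ cᵢ⁻¹d_jcᵢ = D_{ij}, 1 ≤ i,j ≤ 2⟩`. -/
abbrev Gcd (r : ℕ) := PresentedGroup (cdRels r)

namespace GcdAssembly

variable (r : ℕ)

lemma θfun_rels (hr : 1 ≤ r) : ∀ w ∈ cdRels r, FreeGroup.lift (θfun r hr) w = 1 := by
  rintro w ⟨i, j, rfl⟩
  simp only [map_mul, map_inv, FreeGroup.lift_apply_of]
  rw [map_wordProg]
  simp only [FreeGroup.lift_apply_of]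
  have hθ2 : θfun r hr (2 : Fin 4) = emb r hr (FreeGroup.of 0) := rfl
  have hθ3 : θfun r hr (3 : Fin 4) = emb r hr (FreeGroup.of 1) := rfl
  have hθd : θfun r hr (⟨j.val + 2, by omega⟩ : Fin 4) = emb r hr (FreeGroup.of j) := by
    fin_cases j <;> rfl
  rw [hθ2, hθ3, hθd]
  have hword : ∀ m : ℕ, wordProg (emb r hr (FreeGroup.of 0)) (emb r hr (FreeGroup.of 1))
      (r * m + r * j.val) r = emb r hr (φm r m (FreeGroup.of j)) := by
    intro m
    rw [show φm r m (FreeGroup.of j) = wordProg (FreeGroup.of 0) (FreeGroup.of 1)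
      (r * m + r * j.val) r from FreeGroup.lift_apply_of, map_wordProg]
  have harith : r * (2 * (i.val + 1) + (j.val + 1)) = r * (2 * i.val + 3) + r * j.val := by
    ring
  rw [harith]
  have hi : i = 0 ∨ i = 1 := by omega
  rcases hi with hi | hi <;> subst hi
  · -- i = 0 : conjugation by c₁ = (of2 t₁)⁻¹
    have hθc : θfun r hr (⟨(0 : Fin 2).val, by omega⟩ : Fin 4) =
        (of2 r hr (HNNExtension.t : G1 r hr))⁻¹ := rfl
    rw [hθc]
    rw [show (2 * (0 : Fin 2).val + 3) = 3 by simp, hword 3]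
    have h := congrArg (of2 r hr) (conj1 r hr (FreeGroup.of j))
    rw [map_mul, map_mul, map_inv] at h
    rw [inv_inv]
    rw [show emb r hr (FreeGroup.of j) = of2 r hr (of1 r hr (FreeGroup.of j)) from rfl,
      show emb r hr (φm r 3 (FreeGroup.of j)) = of2 r hr (of1 r hr (φm r 3 (FreeGroup.of j)))
        from rfl, h]
    group
  · -- i = 1 : conjugation by c₂ = t₂⁻¹
    have hθc : θfun r hr (⟨(1 : Fin 2).val, by omega⟩ : Fin 4) =
        (HNNExtension.t : G2 r hr)⁻¹ := rfl
    rw [hθc]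
    rw [show (2 * (1 : Fin 2).val + 3) = 5 by simp, hword 5]
    have h := conj2 r hr (FreeGroup.of j)
    rw [inv_inv]
    rw [show emb r hr (FreeGroup.of j) = of2 r hr (of1 r hr (FreeGroup.of j)) from rfl,
      show emb r hr (φm r 5 (FreeGroup.of j)) = of2 r hr (of1 r hr (φm r 5 (FreeGroup.of j)))
        from rfl, h]
    group

end GcdAssembly


/-- For every `r ≥ 1`, the homomorphism `F(d₁,d₂) → G_cd` sending `d₁, d₂` to the
generators `d₁, d₂` of `G_cd` is injective: `F(d₁,d₂)` is a subgroup of `G_cd`. -/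
theorem freeGroup_d_embeds_in_Gcd (r : ℕ) (hr : 1 ≤ r) :
    Function.Injective (FreeGroup.lift (fun j : Fin 2 =>
      (PresentedGroup.of (⟨j.val + 2, by omega⟩ : Fin 4) : Gcd r))) := by
  set Θ : Gcd r →* GcdAssembly.G2 r hr :=
    PresentedGroup.toGroup (GcdAssembly.θfun_rels r hr) with hΘ
  set L : FreeGroup (Fin 2) →* Gcd r := FreeGroup.lift (fun j : Fin 2 =>
    (PresentedGroup.of (⟨j.val + 2, by omega⟩ : Fin 4) : Gcd r)) with hL
  have key : Θ.comp L = GcdAssembly.emb r hr := by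
    apply FreeGroup.ext_hom
    intro j
    rw [MonoidHom.coe_comp, Function.comp_apply, hL, FreeGroup.lift_apply_of, hΘ,
      PresentedGroup.toGroup.of]
    fin_cases j <;> rfl
  intro x y hxy
  apply GcdAssembly.emb_inj r hr
  rw [← key, MonoidHom.coe_comp, Function.comp_apply, Function.comp_apply]
  rw [hxy]
end

section
/- For every integer r ≥ 1: (a) the natural homomorphism G_cd → G_bcd that is the identity on the generators c₁, c₂, d₁, d₂ is injective; (b) the generator b has infinite order in G_bcd; and (c) the cyclic subgroup generated by b in G_bcd intersects the image of G_cd only in the identity element. -/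
/-- Generators of `G_bcd`: `0 = b`, `1 = c₁`, `2 = c₂`, `3 = d₁`, `4 = d₂`.
The relators are `b⁻¹ cᵢ b Cᵢ⁻¹` and `cᵢ⁻¹ d_j cᵢ D_{ij}⁻¹` for `1 ≤ i,j ≤ 2`,
where `Cᵢ = (c₁c₂^{ri+1})⋯(c₁c₂^{ri+r})` and
`D_{ij} = (d₁d₂^{r(2i+j)+1})⋯(d₁d₂^{r(2i+j)+r})`. -/
def bcdRels (r : ℕ) : Set (FreeGroup (Fin 5)) :=
  { w | (∃ i : Fin 2,
          w = (FreeGroup.of (0 : Fin 5))⁻¹ *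
              FreeGroup.of (⟨i.val + 1, by omega⟩ : Fin 5) *
              FreeGroup.of (0 : Fin 5) *
              (wordProg (FreeGroup.of (1 : Fin 5)) (FreeGroup.of (2 : Fin 5))
                (r * (i.val + 1)) r)⁻¹) ∨
        (∃ i j : Fin 2,
          w = (FreeGroup.of (⟨i.val + 1, by omega⟩ : Fin 5))⁻¹ *
              FreeGroup.of (⟨j.val + 3, by omega⟩ : Fin 5) *
              FreeGroup.of (⟨i.val + 1, by omega⟩ : Fin 5) *
              (wordProg (FreeGroup.of (3 : Fin 5)) (FreeGroup.of (4 : Fin 5))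
                (r * (2 * (i.val + 1) + (j.val + 1))) r)⁻¹) }

/-- `G_bcd = ⟨b,c₁,c₂,d₁,d₂ ∣ b⁻¹cᵢb = Cᵢ, cᵢ⁻¹d_jcᵢ = D_{ij}, 1 ≤ i,j ≤ 2⟩`. -/
abbrev Gbcd (r : ℕ) := PresentedGroup (bcdRels r)



set_option linter.unusedSectionVars false
namespace HydraAux

open List FreeGroup

variable {α : Type*} [DecidableEq α]

/-- no-cancellation relation between adjacent letters -/
abbrev NC (a b : α × Bool) : Prop := ¬(a.1 = b.1 ∧ a.2 = !b.2)

theorem chain'_reduce (L : List (α × Bool)) : List.IsChain NC (reduce L) := by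
  induction L with
  | nil => simp [FreeGroup.reduce]
  | cons x L ih =>
    rw [FreeGroup.reduce.cons]
    cases h : reduce L with
    | nil => simp
    | cons y t =>
      rw [h] at ih
      show IsChain NC (if x.1 = y.1 ∧ x.2 = !y.2 then t else x :: y :: t)
      by_cases hc : x.1 = y.1 ∧ x.2 = !y.2
      · rw [if_pos hc]; exact ih.tail
      · rw [if_neg hc]
        exact List.IsChain.cons ih (by intro w hw; simp at hw; rw [← hw]; exact hc)

theorem reduce_eq_self_of_chain' : ∀ {L : List (α × Bool)}, List.IsChain NC L → reduce L = L := by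
  intro L
  induction L with
  | nil => intro _; rfl
  | cons x L ih =>
    intro h
    rw [FreeGroup.reduce.cons, ih h.tail]
    cases hL : L with
    | nil => rfl
    | cons y t =>
      have hxy : NC x y := by
        rw [hL] at h
        exact (List.isChain_cons_cons.1 h).1
      show (if x.1 = y.1 ∧ x.2 = !y.2 then t else x :: y :: t) = x :: y :: t
      simp only [NC] at hxy
      simp [hxy]

theorem chain'_toWord (g : FreeGroup α) : List.IsChain NC g.toWord := by
  have := chain'_reduce (α := α) g.toWord
  rwa [FreeGroup.reduce_toWord] at this

theorem toWord_mk_of_chain' {L : List (α × Bool)} (h : List.IsChain NC L) :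
    (FreeGroup.mk L).toWord = L := by
  rw [FreeGroup.toWord_mk, reduce_eq_self_of_chain' h]

theorem mk_replicate_T (a : α) (n : ℕ) :
    FreeGroup.mk (List.replicate n (a, true)) = FreeGroup.of a ^ n := by
  induction n with
  | zero => rfl
  | succ n ih =>
    rw [List.replicate_succ, pow_succ']
    have : ((a, true) : α × Bool) :: List.replicate n (a, true)
        = [(a, true)] ++ List.replicate n (a, true) := rfl
    rw [this, ← FreeGroup.mul_mk, ih]
    rfl

theorem mk_replicate_F (a : α) (n : ℕ) :
    FreeGroup.mk (List.replicate n (a, false)) = (FreeGroup.of a ^ n)⁻¹ := by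
  have : FreeGroup.invRev (List.replicate n (a, true)) = List.replicate n (a, false) := by
    simp [FreeGroup.invRev, List.map_replicate]
  rw [← this, ← FreeGroup.inv_mk, mk_replicate_T]

theorem run_split (z : α × Bool) (L : List (α × Bool)) :
    ∃ b M, L = List.replicate b z ++ M ∧ M.head? ≠ some z := by
  induction L with
  | nil => exact ⟨0, [], rfl, by simp⟩
  | cons a L ih =>
    by_cases h : a = z
    · obtain ⟨b, M, hLM, hM⟩ := ih
      exact ⟨b + 1, M, by rw [List.replicate_succ, h, List.cons_append, ← hLM], hM⟩
    · exact ⟨0, a :: L, rfl, by simpa using h⟩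

theorem getLast?_replicate_succ (z : α × Bool) (n : ℕ) :
    (List.replicate (n + 1) z).getLast? = some z := by
  induction n with
  | zero => rfl
  | succ n ih => rw [List.replicate_succ, List.getLast?_cons, ih]; simp [List.getLast?_eq_none_iff]

theorem chain'_rep_append {z : α × Bool} (hzz : NC z z) {M : List (α × Bool)}
    (hM : List.IsChain NC M) (hhead : ∀ w ∈ M.head?, NC z w) (e : ℕ) :
    List.IsChain NC (List.replicate e z ++ M) := by
  induction e with
  | zero => exact hM
  | succ e ih =>
    rw [List.replicate_succ, List.cons_append]
    refine List.IsChain.cons ih ?_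
    intro w hw
    cases e with
    | zero =>
      exact hhead w (by simpa using hw)
    | succ e =>
      rw [List.replicate_succ, List.cons_append, List.head?_cons] at hw
      have hzw : z = w := by simpa using hw
      rw [← hzw]; exact hzz

theorem chain'_replicate_NC {z : α × Bool} (hzz : NC z z) (n : ℕ) :
    List.IsChain NC (List.replicate n z) := by
  have := chain'_rep_append hzz List.isChain_nil (by simp) n
  simpa using this

/-! ### progression words as explicit lists -/

theorem wordProg_zero {G : Type*} [Group G] (x y : G) (s : ℕ) : wordProg x y s 0 = 1 := by
  simp [wordProg]

theorem wordProg_succ {G : Type*} [Group G] (x y : G) (s r : ℕ) :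
    wordProg x y s (r + 1) = wordProg x y s r * (x * y ^ (s + r + 1)) := by
  simp [wordProg, List.range_succ]

theorem map_wordProg {G H : Type*} [Group G] [Group H] (f : G →* H) (x y : G) (s r : ℕ) :
    f (wordProg x y s r) = wordProg (f x) (f y) s r := by
  induction r with
  | zero => simp [wordProg_zero]
  | succ r ih => rw [wordProg_succ, wordProg_succ, f.map_mul, f.map_mul, f.map_pow, ih]

theorem wordProg_one {G : Type*} [Group G] (s r : ℕ) : wordProg (1 : G) 1 s r = 1 := by
  induction r with
  | zero => simp [wordProg_zero]
  | succ r ih => rw [wordProg_succ, ih]; simp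

theorem getLast?_replicate (a : α × Bool) : ∀ n, (List.replicate (n + 1) a).getLast? = some a
  | 0 => rfl
  | n + 1 => by
    rw [List.replicate_succ, List.replicate_succ, List.getLast?_cons_cons,
      ← List.replicate_succ, getLast?_replicate a n]

theorem head?_replicate (a : α × Bool) (n : ℕ) :
    (List.replicate (n + 1) a).head? = some a := by rw [List.replicate_succ]; rfl

/-- the reduced word of `wordProg x y s r` in `FreeGroup (Fin 2)` -/
def uL (s : ℕ) : ℕ → List (Fin 2 × Bool)
  | 0 => []
  | k + 1 => uL s k ++ (0, true) :: List.replicate (s + k + 1) (1, true)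

theorem uL_succ (s k : ℕ) :
    uL s (k + 1) = uL s k ++ (0, true) :: List.replicate (s + k + 1) (1, true) := rfl

theorem mk_uL (s : ℕ) : ∀ k, FreeGroup.mk (uL s k)
    = wordProg (FreeGroup.of (0 : Fin 2)) (FreeGroup.of 1) s k
  | 0 => by rw [wordProg_zero]; rfl
  | k + 1 => by
    rw [uL_succ, wordProg_succ, ← mk_uL s k]
    have : ((0, true) : Fin 2 × Bool) :: List.replicate (s + k + 1) (1, true)
        = [(0, true)] ++ List.replicate (s + k + 1) (1, true) := rfl
    rw [this, ← List.append_assoc, ← FreeGroup.mul_mk, ← FreeGroup.mul_mk, mk_replicate_T,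
      mul_assoc]
    rfl

theorem front_uL (s : ℕ) : ∀ k, uL s (k + 1)
    = (0, true) :: (List.replicate (s + 1) (1, true) ++ uL (s + 1) k)
  | 0 => by simp [uL]
  | k + 1 => by
    rw [uL_succ, front_uL s k, uL_succ, show s + (k + 1) + 1 = s + 1 + k + 1 by omega]
    simp [List.cons_append, List.append_assoc]

theorem getLast?_uL (s k : ℕ) : (uL s (k + 1)).getLast? = some (1, true) := by
  rw [uL_succ, List.getLast?_append_cons, show s + k + 1 = (s + k) + 1 from rfl,
    List.replicate_succ, List.getLast?_cons_cons, ← List.replicate_succ,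
    getLast?_replicate]

theorem chain'_uL (s : ℕ) : ∀ k, List.IsChain NC (uL s k)
  | 0 => by simp [uL]
  | k + 1 => by
    rw [uL_succ, List.isChain_append]
    refine ⟨chain'_uL s k, ?_, ?_⟩
    · refine List.IsChain.cons (chain'_replicate_NC (by decide) _) ?_
      intro w hw
      rw [head?_replicate] at hw
      rw [show w = ((1 : Fin 2), true) by simpa using hw.symm]
      decide
    · intro x hx y hy
      rcases k with _ | k
      · simp [uL] at hx
      · rw [getLast?_uL] at hx
        simp only [List.head?_cons, Option.mem_def, Option.some.injEq] at hx hy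
        rw [← hx, ← hy]
        decide

/-- the reduced word of `(wordProg x y s r)⁻¹` -/
def vL (s k : ℕ) : List (Fin 2 × Bool) := FreeGroup.invRev (uL s k)

theorem invRev_append (L₁ L₂ : List (α × Bool)) :
    FreeGroup.invRev (L₁ ++ L₂) = FreeGroup.invRev L₂ ++ FreeGroup.invRev L₁ := by
  simp [FreeGroup.invRev]

theorem invRev_replicate (a : α) (b : Bool) (n : ℕ) :
    FreeGroup.invRev (List.replicate n (a, b)) = List.replicate n (a, !b) := by
  simp [FreeGroup.invRev, List.map_replicate, List.reverse_replicate]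

theorem invRev_cons_replicate (s n : ℕ) :
    FreeGroup.invRev ((0, true) :: List.replicate n ((1 : Fin 2), true))
      = List.replicate n (1, false) ++ [(0, false)] := by
  have : ((0, true) : Fin 2 × Bool) :: List.replicate n (1, true)
      = [(0, true)] ++ List.replicate n (1, true) := rfl
  rw [this, invRev_append, invRev_replicate]
  rfl

theorem mk_vL (s k : ℕ) : FreeGroup.mk (vL s k)
    = (wordProg (FreeGroup.of (0 : Fin 2)) (FreeGroup.of 1) s k)⁻¹ := by
  rw [vL, ← FreeGroup.inv_mk, mk_uL]

theorem vL_succ (s k : ℕ) : vL s (k + 1)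
    = (List.replicate (s + k + 1) (1, false) ++ [(0, false)]) ++ vL s k := by
  rw [vL, uL_succ, invRev_append, invRev_cons_replicate s]
  rfl

theorem vL_end (s k : ℕ) : vL s (k + 1)
    = vL (s + 1) k ++ (List.replicate (s + 1) (1, false) ++ [(0, false)]) := by
  rw [vL, front_uL]
  have : ((0, true) : Fin 2 × Bool) :: (List.replicate (s + 1) (1, true) ++ uL (s + 1) k)
      = ((0, true) :: List.replicate (s + 1) (1, true)) ++ uL (s + 1) k := rfl
  rw [this, invRev_append, invRev_cons_replicate s]
  rfl

theorem chain'_invRev {L : List (α × Bool)} (h : List.IsChain NC L) :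
    List.IsChain NC (FreeGroup.invRev L) := by
  rw [FreeGroup.invRev, List.isChain_reverse, List.isChain_map]
  refine h.imp ?_
  rintro ⟨a, u⟩ ⟨b, v⟩ hab
  simp only [flip, NC, not_and] at hab ⊢
  intro h1 h2
  rw [Bool.not_not] at h2
  exact hab h1.symm h2.symm

theorem chain'_vL (s k : ℕ) : List.IsChain NC (vL s k) := chain'_invRev (chain'_uL s k)

theorem getLast?_vL (s k : ℕ) : (vL s (k + 1)).getLast? = some (0, false) := by
  rw [vL_end, List.getLast?_append_of_ne_nil _ (by simp), List.getLast?_append_of_ne_nil _ (by simp)]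
  rfl

theorem head?_uL_cons (s k : ℕ) (Z : List (Fin 2 × Bool)) :
    (uL s k ++ (0, true) :: Z).head? = some (0, true) := by
  cases k with
  | zero => simp [uL]
  | succ k => rw [front_uL]; rfl

/-! ### cancellation helpers -/

theorem mul_cancelT {a b : ℕ} (x : α) (h : b ≤ a) :
    FreeGroup.mk (List.replicate a (x, true)) * FreeGroup.mk (List.replicate b (x, false))
      = FreeGroup.mk (List.replicate (a - b) (x, true)) := by
  obtain ⟨c, rfl⟩ : ∃ c, a = c + b := ⟨a - b, by omega⟩
  rw [mk_replicate_T, mk_replicate_F, mk_replicate_T, Nat.add_sub_cancel, pow_add,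
    mul_inv_cancel_right]

theorem mul_cancelF {a b : ℕ} (x : α) (h : a ≤ b) :
    FreeGroup.mk (List.replicate a (x, true)) * FreeGroup.mk (List.replicate b (x, false))
      = FreeGroup.mk (List.replicate (b - a) (x, false)) := by
  obtain ⟨c, rfl⟩ : ∃ c, b = a + c := ⟨b - a, by omega⟩
  rw [mk_replicate_T, mk_replicate_F, mk_replicate_F, Nat.add_sub_cancel_left, pow_add]
  group

theorem mul_cancelF' {a b : ℕ} (x : α) (h : b ≤ a) :
    FreeGroup.mk (List.replicate a (x, false)) * FreeGroup.mk (List.replicate b (x, true))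
      = FreeGroup.mk (List.replicate (a - b) (x, false)) := by
  obtain ⟨c, rfl⟩ : ∃ c, a = c + b := ⟨a - b, by omega⟩
  rw [mk_replicate_F, mk_replicate_T, mk_replicate_F, Nat.add_sub_cancel, pow_add]
  group

theorem mul_cancelT' {a b : ℕ} (x : α) (h : a ≤ b) :
    FreeGroup.mk (List.replicate a (x, false)) * FreeGroup.mk (List.replicate b (x, true))
      = FreeGroup.mk (List.replicate (b - a) (x, true)) := by
  obtain ⟨c, rfl⟩ : ∃ c, b = a + c := ⟨b - a, by omega⟩
  rw [mk_replicate_F, mk_replicate_T, mk_replicate_T, Nat.add_sub_cancel_left, pow_add]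
  group

/-! ### the ping-pong sets -/

/-- words starting with `x y^(m+1)` followed by a non-`y` letter -/
def Xset (m : ℕ) : Set (FreeGroup (Fin 2)) :=
  {g | ∃ t, g.toWord = (0, true) :: (List.replicate (m + 1) (1, true) ++ t)
      ∧ t.head? ≠ some (1, true)}

/-- words starting with `y^(-m) x⁻¹` -/
def Yset (m : ℕ) : Set (FreeGroup (Fin 2)) :=
  {g | ∃ t, g.toWord = List.replicate m (1, false) ++ (0, false) :: t}

theorem NC_yT {w : Fin 2 × Bool} (h : w ≠ (1, false)) : NC (1, true) w := by
  revert h; revert w; decide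

theorem NC_yF {w : Fin 2 × Bool} (h : w ≠ (1, true)) : NC (1, false) w := by
  revert h; revert w; decide

theorem NC_xT {w : Fin 2 × Bool} (h : w ≠ (0, false)) : NC (0, true) w := by
  revert h; revert w; decide

theorem NC_xF {w : Fin 2 × Bool} (h : w ≠ (0, true)) : NC (0, false) w := by
  revert h; revert w; decide

theorem chain'_uL_cons (s k : ℕ) (Z : List (Fin 2 × Bool)) (hZ : List.IsChain NC Z)
    (hzhead : ∀ w ∈ Z.head?, NC (0, true) w) :
    List.IsChain NC (uL s k ++ (0, true) :: Z) := by
  rw [List.isChain_append]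
  refine ⟨chain'_uL s k, List.IsChain.cons hZ hzhead, ?_⟩
  intro x hx y hy
  cases k with
  | zero => simp [uL] at hx
  | succ k =>
    rw [getLast?_uL] at hx
    simp only [List.head?_cons, Option.mem_def, Option.some.injEq] at hx hy
    rw [← hx, ← hy]; decide

theorem memX (s k : ℕ) (Z : List (Fin 2 × Bool)) (hZ : List.IsChain NC Z)
    (hzhead : ∀ w ∈ Z.head?, NC (0, true) w) :
    FreeGroup.mk (uL s (k + 1) ++ (0, true) :: Z) ∈ Xset s := by
  have hred := chain'_uL_cons s (k + 1) Z hZ hzhead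
  show ∃ t, _ ∧ _
  rw [toWord_mk_of_chain' hred, front_uL]
  refine ⟨uL (s + 1) k ++ (0, true) :: Z, ?_, ?_⟩
  · simp [List.append_assoc]
  · rw [head?_uL_cons]; simp

theorem chain'_vL_append (s k : ℕ) (Z : List (Fin 2 × Bool)) (hZ : List.IsChain NC Z)
    (hzhead : ∀ w ∈ Z.head?, NC (0, false) w) :
    List.IsChain NC (vL s (k + 1) ++ Z) := by
  rw [List.isChain_append]
  refine ⟨chain'_vL s (k + 1), hZ, ?_⟩
  intro x hx y hy
  rw [getLast?_vL] at hx
  simp only [Option.mem_def, Option.some.injEq] at hx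
  rw [← hx]
  exact hzhead y hy

theorem memY (s k : ℕ) (Z : List (Fin 2 × Bool)) (hZ : List.IsChain NC Z)
    (hzhead : ∀ w ∈ Z.head?, NC (0, false) w) :
    FreeGroup.mk (vL s (k + 1) ++ Z) ∈ Yset (s + k + 1) := by
  have hred := chain'_vL_append s k Z hZ hzhead
  show ∃ t, _
  rw [toWord_mk_of_chain' hred, vL_succ]
  exact ⟨vL s k ++ Z, by simp [List.append_assoc]⟩

/-! ### the two key ping-pong steps -/

theorem keyX (s r' : ℕ) (g : FreeGroup (Fin 2)) (hg : g ∉ Yset (s + r' + 2)) :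
    wordProg (FreeGroup.of (0 : Fin 2)) (FreeGroup.of 1) s (r' + 2) * g ∈ Xset s := by
  obtain ⟨b, M, hLM, hMh⟩ := run_split ((1 : Fin 2), false) g.toWord
  have hchain : List.IsChain NC g.toWord := chain'_toWord g
  rw [hLM] at hchain
  have hMchain : List.IsChain NC M := (List.isChain_append.1 hchain).2.1
  have hMh2 : 0 < b → M.head? ≠ some (1, true) := by
    intro hb hcon
    obtain ⟨b', rfl⟩ : ∃ b', b = b' + 1 := ⟨b - 1, by omega⟩
    exact ((List.isChain_append.1 hchain).2.2 (1, false) (getLast?_replicate _ _)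
      (1, true) hcon) (by decide)
  have hgmk : g = FreeGroup.mk (List.replicate b ((1 : Fin 2), false)) * FreeGroup.mk M := by
    rw [FreeGroup.mul_mk, ← hLM]
    exact FreeGroup.mk_toWord.symm
  have hu : wordProg (FreeGroup.of (0 : Fin 2)) (FreeGroup.of 1) s (r' + 2)
      = FreeGroup.mk (uL s (r' + 1)) * FreeGroup.mk [(0, true)]
        * FreeGroup.mk (List.replicate (s + r' + 2) ((1 : Fin 2), true)) := by
    rw [← mk_uL, uL_succ, show s + (r' + 1) + 1 = s + r' + 2 by omega, FreeGroup.mul_mk,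
      FreeGroup.mul_mk]
    congr 1
    simp [List.append_assoc]
  have hprod : wordProg (FreeGroup.of (0 : Fin 2)) (FreeGroup.of 1) s (r' + 2) * g
      = FreeGroup.mk (uL s (r' + 1)) * FreeGroup.mk [(0, true)]
        * (FreeGroup.mk (List.replicate (s + r' + 2) ((1 : Fin 2), true))
          * FreeGroup.mk (List.replicate b ((1 : Fin 2), false))) * FreeGroup.mk M := by
    rw [hu, hgmk]; simp only [mul_assoc]
  rcases lt_trichotomy b (s + r' + 2) with hb | hb | hb
  · -- partial cancellation of the last y-block
    rw [mul_cancelT _ (by omega : b ≤ s + r' + 2)] at hprod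
    obtain ⟨e, he⟩ : ∃ e, s + r' + 2 - b = e + 1 := ⟨s + r' + 2 - b - 1, by omega⟩
    rw [he, FreeGroup.mul_mk, FreeGroup.mul_mk, FreeGroup.mul_mk, List.append_assoc,
      List.append_assoc, List.singleton_append] at hprod
    rw [hprod]
    refine memX s r' _ ?_ ?_
    · refine chain'_rep_append (by decide) hMchain ?_ _
      intro w hw
      exact NC_yT (by rintro rfl; exact hMh hw)
    · intro w hw
      rw [List.replicate_succ, List.cons_append, List.head?_cons] at hw
      rw [show w = ((1 : Fin 2), true) by simpa using hw.symm]
      decide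
  · -- the last y-block cancels completely
    subst hb
    rw [mul_cancelT _ le_rfl, Nat.sub_self, List.replicate_zero] at hprod
    have h1 : FreeGroup.mk ([] : List (Fin 2 × Bool)) = 1 := rfl
    rw [h1, mul_one, FreeGroup.mul_mk, FreeGroup.mul_mk, List.append_assoc,
      List.singleton_append] at hprod
    rw [hprod]
    refine memX s r' _ hMchain ?_
    intro w hw
    refine NC_xT ?_
    rintro rfl
    apply hg
    cases M with
    | nil => simp at hw
    | cons m t =>
      simp only [List.head?_cons, Option.mem_def, Option.some.injEq] at hw
      exact ⟨t, by rw [hLM, hw]⟩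
  · -- the trailing y⁻¹'s survive
    rw [mul_cancelF _ (by omega : s + r' + 2 ≤ b)] at hprod
    obtain ⟨e, he⟩ : ∃ e, b - (s + r' + 2) = e + 1 := ⟨b - (s + r' + 2) - 1, by omega⟩
    rw [he, FreeGroup.mul_mk, FreeGroup.mul_mk, FreeGroup.mul_mk, List.append_assoc,
      List.append_assoc, List.singleton_append] at hprod
    rw [hprod]
    refine memX s r' _ ?_ ?_
    · refine chain'_rep_append (by decide) hMchain ?_ _
      intro w hw
      exact NC_yF (by rintro rfl; exact hMh2 (by omega) hw)
    · intro w hw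
      rw [List.replicate_succ, List.cons_append, List.head?_cons] at hw
      rw [show w = ((1 : Fin 2), false) by simpa using hw.symm]
      decide

theorem mk_single_F (x : α) : FreeGroup.mk [(x, false)] = (FreeGroup.of x)⁻¹ := by
  have := mk_replicate_F x 1
  simpa using this

theorem keyY (s r' : ℕ) (g : FreeGroup (Fin 2)) (hg : g ∉ Xset s) :
    (wordProg (FreeGroup.of (0 : Fin 2)) (FreeGroup.of 1) s (r' + 2))⁻¹ * g
      ∈ Yset (s + r' + 2) := by
  have hv : FreeGroup.mk (vL s (r' + 2)) = FreeGroup.mk (vL (s + 1) (r' + 1))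
      * FreeGroup.mk (List.replicate (s + 1) ((1 : Fin 2), false))
      * FreeGroup.mk [((0 : Fin 2), false)] := by
    rw [vL_end, FreeGroup.mul_mk, FreeGroup.mul_mk]
    congr 1
    simp [List.append_assoc]
  have hYgoal : s + r' + 2 = (s + 1) + r' + 1 := by omega
  cases hL : g.toWord with
  | nil =>
    have hg1 : g = 1 := FreeGroup.toWord_eq_nil_iff.1 hL
    rw [hg1, mul_one, ← mk_vL, show vL s (r' + 2) = vL s ((r' + 1) + 1) ++ [] by simp,
      show s + r' + 2 = s + (r' + 1) + 1 by omega]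
    exact memY s (r' + 1) [] List.isChain_nil (by simp)
  | cons m M =>
    have hchain : List.IsChain NC g.toWord := chain'_toWord g
    rw [hL] at hchain
    by_cases hm : m = ((0 : Fin 2), true)
    · subst hm
      have hMchain : List.IsChain NC M := hchain.tail
      obtain ⟨c, M', hMM, hM'h⟩ := run_split ((1 : Fin 2), true) M
      rw [hMM] at hMchain
      have hM'chain : List.IsChain NC M' := (List.isChain_append.1 hMchain).2.1
      have hM'h2 : 0 < c → M'.head? ≠ some (1, false) := by
        intro hc hcon
        obtain ⟨c', rfl⟩ : ∃ c', c = c' + 1 := ⟨c - 1, by omega⟩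
        exact ((List.isChain_append.1 hMchain).2.2 (1, true) (getLast?_replicate _ _)
          (1, false) hcon) (by decide)
      have hgmk : g = FreeGroup.mk [((0 : Fin 2), true)]
          * (FreeGroup.mk (List.replicate c ((1 : Fin 2), true)) * FreeGroup.mk M') := by
        rw [FreeGroup.mul_mk, FreeGroup.mul_mk, List.singleton_append, ← hMM, ← hL]
        exact FreeGroup.mk_toWord.symm
      have hcz : ∀ X : FreeGroup (Fin 2),
          FreeGroup.mk [((0 : Fin 2), false)] * (FreeGroup.mk [((0 : Fin 2), true)] * X) = X := by
        intro X
        rw [← mul_assoc, mk_single_F]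
        have : FreeGroup.mk [((0 : Fin 2), true)] = FreeGroup.of 0 := rfl
        rw [this, inv_mul_cancel, one_mul]
      have hprod : (wordProg (FreeGroup.of (0 : Fin 2)) (FreeGroup.of 1) s (r' + 2))⁻¹ * g
          = FreeGroup.mk (vL (s + 1) (r' + 1))
            * (FreeGroup.mk (List.replicate (s + 1) ((1 : Fin 2), false))
              * FreeGroup.mk (List.replicate c ((1 : Fin 2), true))) * FreeGroup.mk M' := by
        rw [← mk_vL, hv, hgmk]
        simp only [mul_assoc]
        rw [hcz]
      rcases lt_trichotomy c (s + 1) with hc | hc | hc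
      · rw [mul_cancelF' _ (by omega : c ≤ s + 1)] at hprod
        obtain ⟨e, he⟩ : ∃ e, s + 1 - c = e + 1 := ⟨s - c, by omega⟩
        rw [he, FreeGroup.mul_mk, FreeGroup.mul_mk, List.append_assoc] at hprod
        rw [hprod, hYgoal]
        refine memY (s + 1) r' _ ?_ ?_
        · refine chain'_rep_append (by decide) hM'chain ?_ _
          intro w hw
          exact NC_yF (by rintro rfl; exact hM'h hw)
        · intro w hw
          rw [List.replicate_succ, List.cons_append, List.head?_cons] at hw
          rw [show w = ((1 : Fin 2), false) by simpa using hw.symm]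
          decide
      · subst hc
        rw [mul_cancelF' _ le_rfl, Nat.sub_self, List.replicate_zero] at hprod
        have h1 : FreeGroup.mk ([] : List (Fin 2 × Bool)) = 1 := rfl
        rw [h1, mul_one, FreeGroup.mul_mk] at hprod
        rw [hprod, hYgoal]
        refine memY (s + 1) r' _ hM'chain ?_
        intro w hw
        refine NC_xF ?_
        rintro rfl
        exact hg ⟨M', by rw [hL, hMM], hM'h⟩
      · rw [mul_cancelT' _ (by omega : s + 1 ≤ c)] at hprod
        obtain ⟨e, he⟩ : ∃ e, c - (s + 1) = e + 1 := ⟨c - s - 2, by omega⟩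
        rw [he, FreeGroup.mul_mk, FreeGroup.mul_mk, List.append_assoc] at hprod
        rw [hprod, hYgoal]
        refine memY (s + 1) r' _ ?_ ?_
        · refine chain'_rep_append (by decide) hM'chain ?_ _
          intro w hw
          exact NC_yT (by rintro rfl; exact hM'h2 (by omega) hw)
        · intro w hw
          rw [List.replicate_succ, List.cons_append, List.head?_cons] at hw
          rw [show w = ((1 : Fin 2), true) by simpa using hw.symm]
          decide
    · -- no cancellation at all
      have hprod : (wordProg (FreeGroup.of (0 : Fin 2)) (FreeGroup.of 1) s (r' + 2))⁻¹ * g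
          = FreeGroup.mk (vL s (r' + 2) ++ (m :: M)) := by
        rw [← mk_vL, ← FreeGroup.mul_mk, ← hL, FreeGroup.mk_toWord]
      rw [hprod, show vL s (r' + 2) = vL s ((r' + 1) + 1) from rfl,
        show s + r' + 2 = s + (r' + 1) + 1 by omega]
      refine memY s (r' + 1) _ hchain ?_
      intro w hw
      rw [List.head?_cons] at hw
      rw [show w = m by simpa using hw.symm]
      exact NC_xF hm

/-! ### disjointness and nonemptiness of the ping-pong sets -/

theorem Xset_nonempty (m : ℕ) : (Xset m).Nonempty := by
  refine ⟨FreeGroup.mk ((0, true) :: List.replicate (m + 1) (1, true)), [], ?_, by simp⟩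
  rw [toWord_mk_of_chain' ?_]
  · simp
  · refine List.IsChain.cons (chain'_replicate_NC (by decide) _) ?_
    intro w hw
    rw [head?_replicate] at hw
    rw [show w = ((1 : Fin 2), true) by simpa using hw.symm]
    decide

theorem rep_append_cancel {a b : ℕ} {z : Fin 2 × Bool} {t₁ t₂ : List (Fin 2 × Bool)}
    (hab : a < b) (heq : List.replicate a z ++ t₁ = List.replicate b z ++ t₂) :
    t₁ = List.replicate (b - a) z ++ t₂ := by
  rw [show b = a + (b - a) by omega, List.replicate_add, List.append_assoc] at heq
  exact List.append_cancel_left heq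

theorem Xset_disj {m m' : ℕ} (h : m < m') : Disjoint (Xset m) (Xset m') := by
  rw [Set.disjoint_left]
  rintro g ⟨t₁, h₁, ht₁⟩ ⟨t₂, h₂, _⟩
  rw [h₁] at h₂
  simp only [List.cons.injEq, true_and] at h₂
  have h₃ := rep_append_cancel (by omega : m + 1 < m' + 1) h₂
  obtain ⟨e, he⟩ : ∃ e, m' + 1 - (m + 1) = e + 1 := ⟨m' - m - 1, by omega⟩
  rw [he, List.replicate_succ, List.cons_append] at h₃
  exact ht₁ (by rw [h₃]; rfl)

theorem Yset_disj {m m' : ℕ} (h : m < m') : Disjoint (Yset m) (Yset m') := by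
  rw [Set.disjoint_left]
  rintro g ⟨t₁, h₁⟩ ⟨t₂, h₂⟩
  rw [h₁] at h₂
  have h₃ := rep_append_cancel h h₂
  obtain ⟨e, he⟩ : ∃ e, m' - m = e + 1 := ⟨m' - m - 1, by omega⟩
  rw [he, List.replicate_succ, List.cons_append] at h₃
  have h4 : ((0 : Fin 2), false) = ((1 : Fin 2), false) := by
    have := congrArg List.head? h₃
    simpa using this
  exact absurd h4 (by decide)

theorem XYset_disj (m m' : ℕ) (h : 1 ≤ m') : Disjoint (Xset m) (Yset m') := by
  rw [Set.disjoint_left]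
  rintro g ⟨t₁, h₁, _⟩ ⟨t₂, h₂⟩
  rw [h₁] at h₂
  obtain ⟨e, he⟩ : ∃ e, m' = e + 1 := ⟨m' - 1, by omega⟩
  have hr : List.replicate (e + 1) ((1 : Fin 2), false) ++ ((0, false) :: t₂)
      = (1, false) :: (List.replicate e ((1 : Fin 2), false) ++ ((0, false) :: t₂)) := by
    rw [List.replicate_succ]; rfl
  rw [he, hr] at h₂
  have h4 : ((0 : Fin 2), true) = ((1 : Fin 2), false) := by
    have := congrArg List.head? h₂
    simpa using this
  exact absurd h4 (by decide)

/-! ### injectivity of the map determined by the progression words -/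

theorem uu_inj (r : ℕ) (hr : 1 ≤ r) :
    Function.Injective (FreeGroup.lift (fun i : Fin 2 =>
      wordProg (FreeGroup.of (0 : Fin 2)) (FreeGroup.of 1) (r * (i.val + 1)) r)) := by
  rcases eq_or_lt_of_le hr with h1 | h2
  · -- `r = 1` : the two words are part of a basis of the whole group, exhibit an inverse
    obtain rfl : r = 1 := h1.symm
    set F := FreeGroup.lift (fun i : Fin 2 =>
      wordProg (FreeGroup.of (0 : Fin 2)) (FreeGroup.of 1) (1 * (i.val + 1)) 1) with hF
    set h : FreeGroup (Fin 2) →* FreeGroup (Fin 2) := FreeGroup.lift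
      (fun i : Fin 2 => if i.val = 0
        then FreeGroup.of 0 * ((FreeGroup.of 1)⁻¹ * FreeGroup.of 0) ^ 2
        else (FreeGroup.of 0)⁻¹ * FreeGroup.of 1) with hh
    have hcomp : h.comp F = MonoidHom.id _ := by
      apply FreeGroup.ext_hom
      intro i
      fin_cases i <;>
        simp [hF, hh, wordProg_succ, wordProg_zero, pow_succ, pow_zero, mul_assoc]
    intro u v huv
    have h1 := congrArg h huv
    rwa [← MonoidHom.comp_apply, ← MonoidHom.comp_apply, hcomp, MonoidHom.id_apply,
      MonoidHom.id_apply] at h1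
  · -- `r ≥ 2` : ping-pong
    obtain ⟨r', rfl⟩ : ∃ r', r = r' + 2 := ⟨r - 2, by omega⟩
    apply FreeGroup.injective_lift_of_ping_pong _
      (fun i : Fin 2 => Xset ((r' + 2) * (i.val + 1)))
      (fun i : Fin 2 => Yset ((r' + 2) * (i.val + 1) + (r' + 2)))
    · intro i
      exact Xset_nonempty _
    · intro i j hij
      have hv : i.val ≠ j.val := fun hc => hij (Fin.val_injective hc)
      rcases lt_or_gt_of_ne hv with hlt | hgt
      · exact Xset_disj ((mul_lt_mul_iff_right₀ (by omega)).2 (by omega))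
      · exact (Xset_disj ((mul_lt_mul_iff_right₀ (by omega)).2 (by omega))).symm
    · intro i j hij
      have hv : i.val ≠ j.val := fun hc => hij (Fin.val_injective hc)
      rcases lt_or_gt_of_ne hv with hlt | hgt
      · exact Yset_disj (by
          have := (mul_lt_mul_iff_right₀ (by omega : 0 < r' + 2)).2 (by omega : i.val + 1 < j.val + 1)
          omega)
      · exact (Yset_disj (by
          have := (mul_lt_mul_iff_right₀ (by omega : 0 < r' + 2)).2 (by omega : j.val + 1 < i.val + 1)
          omega)).symm
    · intro i j
      exact XYset_disj _ _ (le_trans (by omega) (Nat.le_add_left (r' + 2) _))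
    · intro i
      rintro p ⟨g, hg, rfl⟩
      show wordProg (FreeGroup.of (0 : Fin 2)) (FreeGroup.of 1) ((r' + 2) * (i.val + 1))
          (r' + 2) * g ∈ Xset ((r' + 2) * (i.val + 1))
      exact keyX ((r' + 2) * (i.val + 1)) r' g
        (by rw [show (r' + 2) * (i.val + 1) + r' + 2 = (r' + 2) * (i.val + 1) + (r' + 2) by ring]
            exact hg)
    · intro i
      rintro p ⟨g, hg, rfl⟩
      show (wordProg (FreeGroup.of (0 : Fin 2)) (FreeGroup.of 1) ((r' + 2) * (i.val + 1))
          (r' + 2))⁻¹ * g ∈ Yset ((r' + 2) * (i.val + 1) + (r' + 2))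
      have := keyY ((r' + 2) * (i.val + 1)) r' g hg
      rw [show (r' + 2) * (i.val + 1) + r' + 2 = (r' + 2) * (i.val + 1) + (r' + 2) by ring] at this
      exact this

end HydraAux

namespace HydraAux

section Glue

variable {r : ℕ}

theorem mk_rel_eq_one {β : Type} {rels : Set (FreeGroup β)} {w : FreeGroup β} (h : w ∈ rels) :
    PresentedGroup.mk rels w = 1 := by
  show (QuotientGroup.mk w : PresentedGroup rels) = 1
  rw [QuotientGroup.eq_one_iff]
  exact Subgroup.subset_normalClosure h

theorem mk_of {β : Type} {rels : Set (FreeGroup β)} (x : β) :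
    PresentedGroup.mk rels (FreeGroup.of x) = PresentedGroup.of x := rfl

/-- the retraction of `Gcd` onto the free group on `c₁, c₂`, killing `d₁, d₂` -/
def fpi : Fin 4 → FreeGroup (Fin 2) := fun x =>
  if h : x.val < 2 then FreeGroup.of ⟨x.val, h⟩ else 1

theorem relpi' : ∀ x ∈ cdRels r, FreeGroup.lift fpi x = 1 := by
  rintro w ⟨i, j, rfl⟩
  simp only [map_mul, map_inv, map_wordProg, FreeGroup.lift_apply_of]
  have h1 : fpi (⟨i.val, by omega⟩ : Fin 4) = FreeGroup.of ⟨i.val, by omega⟩ :=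
    dif_pos (by show i.val < 2; omega)
  have h2 : fpi (⟨j.val + 2, by omega⟩ : Fin 4) = 1 := dif_neg (by show ¬(j.val + 2 < 2); omega)
  have h3 : fpi (2 : Fin 4) = 1 := dif_neg (by decide)
  have h4 : fpi (3 : Fin 4) = 1 := dif_neg (by decide)
  rw [h1, h2, h3, h4, wordProg_one]
  group

/-- retraction `Gcd r → F₂` -/
def piG (r : ℕ) : Gcd r →* FreeGroup (Fin 2) :=
  PresentedGroup.toGroup (relpi' (r := r))

/-- section `F₂ → Gcd r` sending the generators to `c₁, c₂` -/
def iotaG (r : ℕ) : FreeGroup (Fin 2) →* Gcd r :=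
  FreeGroup.lift fun i => PresentedGroup.of ⟨i.val, by omega⟩

theorem pi_iota (r : ℕ) : (piG r).comp (iotaG r) = MonoidHom.id _ := by
  apply FreeGroup.ext_hom
  intro i
  rw [MonoidHom.comp_apply, MonoidHom.id_apply, iotaG, FreeGroup.lift_apply_of, piG,
    PresentedGroup.toGroup.of]
  exact dif_pos i.isLt

theorem iota_inj (r : ℕ) : Function.Injective (iotaG r) := by
  have h1 : ∀ w, piG r (iotaG r w) = w := fun w => by
    have := congrArg (fun f : FreeGroup (Fin 2) →* FreeGroup (Fin 2) => f w) (pi_iota r)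
    simpa using this
  intro u v huv
  rw [← h1 u, ← h1 v, huv]

/-- the endomorphism of `F₂` given by the progression words -/
def uuG (r : ℕ) : FreeGroup (Fin 2) →* FreeGroup (Fin 2) :=
  FreeGroup.lift fun i : Fin 2 =>
    wordProg (FreeGroup.of (0 : Fin 2)) (FreeGroup.of 1) (r * (i.val + 1)) r

/-- `F₂ → Gcd r` sending the generators to `C₁, C₂` -/
def iotaC (r : ℕ) : FreeGroup (Fin 2) →* Gcd r := (iotaG r).comp (uuG r)

theorem iotaC_inj (r : ℕ) (hr : 1 ≤ r) : Function.Injective (iotaC r) :=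
  (iota_inj r).comp (uu_inj r hr)


section HNNpart

variable (r : ℕ) (hr : 1 ≤ r)

/-- the isomorphism `⟨c₁,c₂⟩ ≃ ⟨C₁,C₂⟩`, `cᵢ ↦ Cᵢ` -/
noncomputable def eAB : (iotaG r).range ≃* (iotaC r).range :=
  (MonoidHom.ofInjective (iota_inj r)).symm.trans (MonoidHom.ofInjective (iotaC_inj r hr))

theorem eAB_apply (w : FreeGroup (Fin 2)) :
    ((eAB r hr (MonoidHom.ofInjective (iota_inj r) w) : (iotaC r).range) : Gcd r)
      = iotaC r w := by
  rw [eAB, MulEquiv.trans_apply]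
  have hs : (MonoidHom.ofInjective (iota_inj r)).symm (MonoidHom.ofInjective (iota_inj r) w)
      = w := MulEquiv.symm_apply_apply _ _
  rw [hs, MonoidHom.ofInjective_apply]

/-- the HNN extension of `Gcd r` along `eAB` -/
abbrev HnnG := HNNExtension (Gcd r) (iotaG r).range (iotaC r).range (eAB r hr)

/-- the presentation map `Fin 5 → HnnG` -/
noncomputable def fPhi : Fin 5 → HnnG r hr := fun x =>
  if x.val = 0 then (HNNExtension.t)⁻¹
  else HNNExtension.of (PresentedGroup.of (⟨x.val - 1, by omega⟩ : Fin 4))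

theorem relPhi : ∀ w ∈ bcdRels r, FreeGroup.lift (fPhi r hr) w = 1 := by
  rintro w (⟨i, rfl⟩ | ⟨i, j, rfl⟩)
  · -- the HNN relations  b⁻¹ cᵢ b = Cᵢ
    simp only [map_mul, map_inv, map_wordProg, FreeGroup.lift_apply_of]
    have h0 : fPhi r hr 0 = (HNNExtension.t)⁻¹ := if_pos rfl
    have hi : fPhi r hr (⟨i.val + 1, by omega⟩ : Fin 5)
        = HNNExtension.of (PresentedGroup.of (⟨i.val, by omega⟩ : Fin 4)) := by
      rw [fPhi, if_neg (by show ¬(i.val + 1 = 0); omega)]; rfl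
    have h1 : fPhi r hr 1 = HNNExtension.of (PresentedGroup.of (⟨0, by omega⟩ : Fin 4)) := by
      rw [fPhi, if_neg (by decide)]; rfl
    have h2 : fPhi r hr 2 = HNNExtension.of (PresentedGroup.of (⟨1, by omega⟩ : Fin 4)) := by
      rw [fPhi, if_neg (by decide)]; rfl
    rw [h0, hi, h1, h2, inv_inv]
    -- identify the wordProg with the image of `Cᵢ`
    have hword : (HNNExtension.of (iotaC r (FreeGroup.of i)) : HnnG r hr)
        = wordProg (HNNExtension.of (PresentedGroup.of (⟨0, by omega⟩ : Fin 4)))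
          (HNNExtension.of (PresentedGroup.of (⟨1, by omega⟩ : Fin 4))) (r * (i.val + 1)) r := by
      show (HNNExtension.of ((iotaG r) (uuG r (FreeGroup.of i))) : HnnG r hr) = _
      rw [uuG, FreeGroup.lift_apply_of]
      rw [map_wordProg, map_wordProg]
      simp only [iotaG, FreeGroup.lift_apply_of]
      rfl
    rw [← hword]
    -- the conjugation relation in the HNN extension
    have hconj := HNNExtension.equiv_eq_conj (φ := eAB r hr)
      (MonoidHom.ofInjective (iota_inj r) (FreeGroup.of i))
    rw [eAB_apply, MonoidHom.ofInjective_apply] at hconj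
    simp only [iotaG, FreeGroup.lift_apply_of] at hconj
    exact mul_inv_eq_one.2 hconj.symm
  · -- the `Gcd` relations
    simp only [map_mul, map_inv, map_wordProg, FreeGroup.lift_apply_of]
    have hi : fPhi r hr (⟨i.val + 1, by omega⟩ : Fin 5)
        = HNNExtension.of (PresentedGroup.of (⟨i.val, by omega⟩ : Fin 4)) := by
      rw [fPhi, if_neg (by show ¬(i.val + 1 = 0); omega)]; rfl
    have hj : fPhi r hr (⟨j.val + 3, by omega⟩ : Fin 5)
        = HNNExtension.of (PresentedGroup.of (⟨j.val + 2, by omega⟩ : Fin 4)) := by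
      rw [fPhi, if_neg (by show ¬(j.val + 3 = 0); omega)]; rfl
    have h3 : fPhi r hr 3 = HNNExtension.of (PresentedGroup.of (⟨2, by omega⟩ : Fin 4)) := by
      rw [fPhi, if_neg (by decide)]; rfl
    have h4 : fPhi r hr 4 = HNNExtension.of (PresentedGroup.of (⟨3, by omega⟩ : Fin 4)) := by
      rw [fPhi, if_neg (by decide)]; rfl
    rw [hi, hj, h3, h4]
    -- now a relation in `Gcd r`
    have hrel := mk_rel_eq_one (show _ ∈ cdRels r from ⟨i, j, rfl⟩)
    simp only [map_mul, map_inv, map_wordProg, mk_of] at hrel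
    have := congrArg (HNNExtension.of (φ := eAB r hr)) hrel
    simp only [map_mul, map_inv, map_one, map_wordProg] at this
    exact this


/-- the presentation map `Fin 4 → Gbcd r` defining `φ` -/
def fphi : Fin 4 → Gbcd r := fun x => PresentedGroup.of ⟨x.val + 1, by have := x.isLt; omega⟩

theorem relphi : ∀ w ∈ cdRels r, FreeGroup.lift (fphi (r := r)) w = 1 := by
  rintro w ⟨i, j, rfl⟩
  simp only [map_mul, map_inv, map_wordProg, FreeGroup.lift_apply_of]
  have hrel := mk_rel_eq_one (show _ ∈ bcdRels r from Or.inr ⟨i, j, rfl⟩)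
  simp only [map_mul, map_inv, map_wordProg, mk_of] at hrel
  exact hrel

/-- the natural homomorphism `φ : Gcd r → Gbcd r` -/
def phiG (r : ℕ) : Gcd r →* Gbcd r := PresentedGroup.toGroup (relphi (r := r))

theorem phiG_of (x : Fin 4) :
    phiG r (PresentedGroup.of x) = PresentedGroup.of (⟨x.val + 1, by have := x.isLt; omega⟩ : Fin 5) :=
  PresentedGroup.toGroup.of _

/-- the homomorphism `Gbcd r → HnnG r` -/
noncomputable def PhiH (r : ℕ) (hr : 1 ≤ r) : Gbcd r →* HnnG r hr :=
  PresentedGroup.toGroup (relPhi r hr)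

theorem Phi_phi : (PhiH r hr).comp (phiG r)
    = (HNNExtension.of : Gcd r →* HnnG r hr) := by
  apply PresentedGroup.ext
  intro x
  rw [MonoidHom.comp_apply, phiG_of, PhiH, PresentedGroup.toGroup.of,
    fPhi, if_neg (by show ¬(x.val + 1 = 0); omega)]
  rfl

theorem phi_inj (r : ℕ) (hr : 1 ≤ r) : Function.Injective (phiG r) := by
  have h2 : ∀ g, PhiH r hr (phiG r g) = HNNExtension.of g := fun g => by
    have := congrArg (fun f : Gcd r →* HnnG r hr => f g) (Phi_phi r hr)
    simpa using this
  intro u v h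
  apply HNNExtension.of_injective (eAB r hr)
  rw [← h2 u, ← h2 v, h]

/-- the `ℤ`-detector killing everything but `b` -/
def fpsi : Fin 5 → Multiplicative ℤ := fun x =>
  if x.val = 0 then Multiplicative.ofAdd 1 else 1

theorem relpsi : ∀ w ∈ bcdRels r, FreeGroup.lift fpsi w = 1 := by
  rintro w (⟨i, rfl⟩ | ⟨i, j, rfl⟩) <;>
    simp only [map_mul, map_inv, map_wordProg, FreeGroup.lift_apply_of]
  · have h0 : fpsi 0 = Multiplicative.ofAdd 1 := if_pos rfl
    have hi : fpsi (⟨i.val + 1, by omega⟩ : Fin 5) = 1 :=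
      if_neg (by show ¬(i.val + 1 = 0); omega)
    have h1 : fpsi 1 = 1 := if_neg (by decide)
    have h2 : fpsi 2 = 1 := if_neg (by decide)
    rw [h0, hi, h1, h2, wordProg_one]
    group
  · have hi : fpsi (⟨i.val + 1, by omega⟩ : Fin 5) = 1 :=
      if_neg (by show ¬(i.val + 1 = 0); omega)
    have hj : fpsi (⟨j.val + 3, by omega⟩ : Fin 5) = 1 :=
      if_neg (by show ¬(j.val + 3 = 0); omega)
    have h3 : fpsi 3 = 1 := if_neg (by decide)
    have h4 : fpsi 4 = 1 := if_neg (by decide)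
    rw [hi, hj, h3, h4, wordProg_one]
    group

/-- `ψ : Gbcd r → ℤ` -/
def psiB (r : ℕ) : Gbcd r →* Multiplicative ℤ := PresentedGroup.toGroup (relpsi (r := r))

theorem psiB_b : psiB r (PresentedGroup.of (0 : Fin 5)) = Multiplicative.ofAdd 1 := by
  rw [psiB, PresentedGroup.toGroup.of]
  exact if_pos rfl

theorem psiB_phi (g : Gcd r) : psiB r (phiG r g) = 1 := by
  have hcomp : (psiB r).comp (phiG r) = 1 := by
    apply PresentedGroup.ext
    intro x
    rw [MonoidHom.comp_apply, phiG_of, psiB, PresentedGroup.toGroup.of,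
      MonoidHom.one_apply]
    exact if_neg (by show ¬(x.val + 1 = 0); omega)
  have := congrArg (fun f : Gcd r →* Multiplicative ℤ => f g) hcomp
  simpa using this

theorem b_not_fin (r : ℕ) : ¬ IsOfFinOrder (PresentedGroup.of (0 : Fin 5) : Gbcd r) := by
  intro hfin
  have h2 := (psiB r).isOfFinOrder hfin
  rw [psiB_b] at h2
  obtain ⟨n, hn, hpow⟩ := isOfFinOrder_iff_pow_eq_one.1 h2
  have h3 := congrArg Multiplicative.toAdd hpow
  simp only [toAdd_pow, toAdd_ofAdd, smul_eq_mul, nsmul_eq_mul, mul_one, toAdd_one] at h3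
  omega

theorem inter_bot (r : ℕ) :
    Subgroup.zpowers (PresentedGroup.of (0 : Fin 5) : Gbcd r) ⊓ (phiG r).range = ⊥ := by
  rw [Subgroup.eq_bot_iff_forall]
  intro x hx
  rw [Subgroup.mem_inf] at hx
  obtain ⟨k, hk⟩ := Subgroup.mem_zpowers_iff.1 hx.1
  obtain ⟨g, hg⟩ := MonoidHom.mem_range.1 hx.2
  have e1 : psiB r x = Multiplicative.ofAdd (k : ℤ) := by
    rw [← hk, map_zpow, psiB_b, ← ofAdd_zsmul, smul_eq_mul, mul_one]
  have e2 : psiB r x = 1 := by rw [← hg]; exact psiB_phi r g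
  have e3 : k = 0 := by
    have := e1.symm.trans e2
    simpa using this
  rw [← hk, e3, zpow_zero]

end HNNpart

end Glue

end HydraAux


/-- For every `r ≥ 1` there is a (necessarily unique) homomorphism
`φ : G_cd → G_bcd` that is the identity on the generators `c₁,c₂,d₁,d₂`
(in `G_cd` the letters `0,1,2,3` are `c₁,c₂,d₁,d₂`; in `G_bcd` they are the
letters `1,2,3,4`), and moreover: (a) `φ` is injective; (b) the generator `b`
(letter `0` of `G_bcd`) has infinite order; (c) the cyclic subgroup generated
by `b` intersects the image of `φ` only in the identity. -/
theorem Gbcd_is_HNN_extension_of_Gcd (r : ℕ) (hr : 1 ≤ r) :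
    ∃ φ : Gcd r →* Gbcd r,
      (∀ x : Fin 4, φ (PresentedGroup.of x) =
        PresentedGroup.of (⟨x.val + 1, by omega⟩ : Fin 5)) ∧
      Function.Injective φ ∧
      ¬ IsOfFinOrder (PresentedGroup.of (0 : Fin 5) : Gbcd r) ∧
      Subgroup.zpowers (PresentedGroup.of (0 : Fin 5) : Gbcd r) ⊓ φ.range = ⊥ := by
  exact ⟨HydraAux.phiG r, fun x => HydraAux.phiG_of r x, HydraAux.phi_inj r hr,
    HydraAux.b_not_fin r, HydraAux.inter_bot r⟩
end

section
/- Fix an integer r ≥ 1 and an integer n ≥ 1. Let d be a nonidentity element of the image of the homomorphism F(d₁,d₂) → G_cd (sending d₁, d₂ to the generators d₁, d₂). Let r₀, r₁, …, r_{n−1}, r_{n+1} and s₁, …, s_n be integers with s₁, …, s_n all nonzero and r₁, …, r_{n−1} all nonzero (r₀ and r_{n+1} arbitrary). Then the element d·c₁^{r₀}·(∏_{i=1}^{n−1} c₂^{sᵢ}c₁^{rᵢ})·c₂^{s_n}·c₁^{r_{n+1}} is not the identity in G_cd. -/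
open FreeGroup List

-- of x ^ k as mk of a replicate block
lemma of_zpow_eq_mk {α : Type*} (x : α) (k : ℤ) :
    (FreeGroup.of x) ^ k = FreeGroup.mk (List.replicate k.natAbs (x, decide (0 < k))) := by
  rcases k with n | n
  · cases n with
    | zero => simp [FreeGroup.one_eq_mk]
    | succ m =>
      rw [Int.ofNat_eq_coe, zpow_natCast, FreeGroup.of, FreeGroup.pow_mk,
        List.flatten_replicate_singleton]
      have h1 : ((m + 1 : ℕ) : ℤ).natAbs = m + 1 := by omega
      have h2 : decide ((0:ℤ) < ((m + 1 : ℕ) : ℤ)) = true := by simp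
      rw [h1, h2]
  · rw [zpow_negSucc, FreeGroup.of, FreeGroup.pow_mk, List.flatten_replicate_singleton,
      FreeGroup.inv_mk, FreeGroup.invRev]
    simp

lemma reduce_rep_append {α : Type*} [DecidableEq α] (x : α) (b : Bool) (m : ℕ)
    (L : List (α × Bool)) (hL : FreeGroup.reduce L = L)
    (hhead : ∀ p ∈ L.head?, p.1 ≠ x) :
    FreeGroup.reduce (List.replicate m (x, b) ++ L) = List.replicate m (x, b) ++ L := by
  induction m with
  | zero => simpa using hL
  | succ m ih =>
    rw [List.replicate_succ, List.cons_append, FreeGroup.reduce.cons, ih]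
    cases m with
    | zero =>
      simp only [List.replicate_zero, List.nil_append]
      cases L with
      | nil => rfl
      | cons p tl =>
        have : p.1 ≠ x := hhead p (by simp)
        simp [this.symm]
    | succ m' =>
      rw [List.replicate_succ, List.cons_append]
      simp

/-- `w` is nontrivial and its reduced word starts with generator `x`. -/
def GoodFG {α : Type*} [DecidableEq α] (x : α) (w : FreeGroup α) : Prop :=
  ∃ c tl, w.toWord = (x, c) :: tl

lemma GoodFG.ne_one {α : Type*} [DecidableEq α] {x : α} {w : FreeGroup α} (h : GoodFG x w) : w ≠ 1 := by
  obtain ⟨c, tl, h⟩ := h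
  intro hw
  rw [hw, FreeGroup.toWord_one] at h
  exact List.cons_ne_nil _ _ h.symm

lemma good_of_zpow {α : Type*} [DecidableEq α] (x : α) (k : ℤ) (hk : k ≠ 0) :
    GoodFG x ((FreeGroup.of x) ^ k) := by
  rw [of_zpow_eq_mk]
  have hm : k.natAbs = (k.natAbs - 1) + 1 := by omega
  refine ⟨decide (0 < k), List.replicate (k.natAbs - 1) (x, decide (0 < k)), ?_⟩
  rw [FreeGroup.toWord_mk, FreeGroup.reduce_replicate, hm, List.replicate_succ]
  norm_num

lemma good_zpow_mul {α : Type*} [DecidableEq α] {x y : α} (hxy : x ≠ y) (k : ℤ) (hk : k ≠ 0)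
    {w : FreeGroup α} (hw : GoodFG y w) : GoodFG x ((FreeGroup.of x) ^ k * w) := by
  obtain ⟨c, tl, hhd⟩ := hw
  have hmul : (FreeGroup.of x) ^ k * w =
      FreeGroup.mk (List.replicate k.natAbs (x, decide (0 < k)) ++ w.toWord) := by
    rw [of_zpow_eq_mk]
    conv_lhs => rw [← FreeGroup.mk_toWord (x := w)]
    rw [FreeGroup.mul_mk]
  have hred : FreeGroup.reduce (List.replicate k.natAbs (x, decide (0 < k)) ++ w.toWord)
      = List.replicate k.natAbs (x, decide (0 < k)) ++ w.toWord := by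
    refine reduce_rep_append _ _ _ _ (FreeGroup.reduce_toWord w) ?_
    intro p hp
    rw [hhd] at hp
    simp only [List.head?_cons, Option.mem_def, Option.some.injEq] at hp
    rw [← hp]
    exact fun h => hxy h.symm
  have hm : k.natAbs = (k.natAbs - 1) + 1 := by omega
  refine ⟨decide (0 < k), List.replicate (k.natAbs - 1) (x, decide (0 < k)) ++ w.toWord, ?_⟩
  rw [hmul, FreeGroup.toWord_mk, hred, hm, List.replicate_succ, List.cons_append]
  norm_num

lemma good_aux (s rr : ℕ → ℤ) (m : ℕ) :
    (∀ i, 1 ≤ i → i ≤ m → s i ≠ 0) → (∀ i, 1 ≤ i → i ≤ m → rr i ≠ 0) →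
    ∀ w : FreeGroup (Fin 2), GoodFG 1 w →
    GoodFG 1 (((List.range m).map (fun i =>
      (FreeGroup.of (1 : Fin 2)) ^ (s (i + 1)) * (FreeGroup.of (0 : Fin 2)) ^ (rr (i + 1)))).prod
      * w) := by
  induction m with
  | zero => intro _ _ w hw; simpa using hw
  | succ m ih =>
    intro hs hrr w hw
    rw [List.range_succ, List.map_append, List.prod_append]
    simp only [List.map_cons, List.map_nil, List.prod_cons, List.prod_nil, mul_one]
    rw [mul_assoc, mul_assoc]
    refine ih (fun i h1 h2 => hs i h1 (by omega)) (fun i h1 h2 => hrr i h1 (by omega)) _ ?_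
    rw [← mul_assoc]
    have h1 : GoodFG 0 ((FreeGroup.of (0 : Fin 2)) ^ (rr (m + 1)) * w) :=
      good_zpow_mul (by decide) _ (hrr (m + 1) (by omega) le_rfl) hw
    rw [mul_assoc]
    exact good_zpow_mul (by decide) _ (hs (m + 1) (by omega) le_rfl) h1

lemma key_free (n : ℕ) (hn : 1 ≤ n) (rr s : ℕ → ℤ)
    (hs : ∀ i, 1 ≤ i → i ≤ n → s i ≠ 0) (hrr : ∀ i, 1 ≤ i → i ≤ n - 1 → rr i ≠ 0) :
    (FreeGroup.of (0 : Fin 2)) ^ (rr 0) *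
      ((List.range (n - 1)).map (fun i =>
        (FreeGroup.of (1 : Fin 2)) ^ (s (i + 1)) * (FreeGroup.of (0 : Fin 2)) ^ (rr (i + 1)))).prod *
      (FreeGroup.of (1 : Fin 2)) ^ (s n) * (FreeGroup.of (0 : Fin 2)) ^ (rr (n + 1)) ≠ 1 := by
  -- base : of 1 ^ s n * of 0 ^ rr (n+1) is good at 1
  have hbase : GoodFG 1 ((FreeGroup.of (1 : Fin 2)) ^ (s n) *
      (FreeGroup.of (0 : Fin 2)) ^ (rr (n + 1))) := by
    rcases eq_or_ne (rr (n + 1)) 0 with h | h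
    · rw [h, zpow_zero, mul_one]
      exact good_of_zpow _ _ (hs n hn le_rfl)
    · exact good_zpow_mul (by decide) _ (hs n hn le_rfl) (good_of_zpow _ _ h)
  have hmid := good_aux s rr (n - 1)
    (fun i h1 h2 => hs i h1 (by omega)) (fun i h1 h2 => hrr i h1 h2) _ hbase
  intro hcontra
  rcases eq_or_ne (rr 0) 0 with h0 | h0
  · apply hmid.ne_one
    rw [← hcontra, h0, zpow_zero, one_mul, mul_assoc]
  · refine (good_zpow_mul (show (0 : Fin 2) ≠ 1 by decide) _ h0 hmid).ne_one ?_
    rw [← hcontra]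
    group

def killd : Fin 4 → FreeGroup (Fin 2)
  | 0 => FreeGroup.of 0
  | 1 => FreeGroup.of 1
  | 2 => 1
  | 3 => 1

lemma killd_rels (r : ℕ) : ∀ w ∈ cdRels r, FreeGroup.lift killd w = 1 := by
  rintro w ⟨i, j, rfl⟩
  have h23 : ∀ s' r', FreeGroup.lift killd
      (wordProg (FreeGroup.of (2 : Fin 4)) (FreeGroup.of (3 : Fin 4)) s' r') = 1 := by
    intro s' r'
    rw [wordProg, map_list_prod, List.map_map]
    refine List.prod_eq_one ?_
    intro a ha
    simp only [List.mem_map] at ha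
    obtain ⟨k, _, rfl⟩ := ha
    simp [killd]
  rw [MonoidHom.map_mul, MonoidHom.map_mul, MonoidHom.map_mul, MonoidHom.map_inv,
    MonoidHom.map_inv, h23]
  fin_cases j <;> simp [killd]

/-- Fix `r ≥ 1` and `n ≥ 1`.  If `d` is a nonidentity element of the image of
`F(d₁,d₂) → G_cd`, and `r₀,…,r_{n+1}, s₁,…,s_n` are integers with `s₁,…,s_n` and
`r₁,…,r_{n−1}` nonzero, then
`d·c₁^{r₀}·(∏_{i=1}^{n−1} c₂^{sᵢ}c₁^{rᵢ})·c₂^{s_n}·c₁^{r_{n+1}} ≠ 1` in `G_cd`. -/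
theorem britton_pattern_nontrivial_in_Gcd (r : ℕ) (hr : 1 ≤ r) (n : ℕ) (hn : 1 ≤ n)
    (d : Gcd r)
    (hd : d ∈ (FreeGroup.lift (fun j : Fin 2 =>
      (PresentedGroup.of (⟨j.val + 2, by omega⟩ : Fin 4) : Gcd r))).range)
    (hd1 : d ≠ 1)
    (rr s : ℕ → ℤ)
    (hs : ∀ i, 1 ≤ i → i ≤ n → s i ≠ 0)
    (hrr : ∀ i, 1 ≤ i → i ≤ n - 1 → rr i ≠ 0) :
    d * (PresentedGroup.of (0 : Fin 4) : Gcd r) ^ (rr 0) *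
      ((List.range (n - 1)).map (fun i =>
        (PresentedGroup.of (1 : Fin 4) : Gcd r) ^ (s (i + 1)) *
        (PresentedGroup.of (0 : Fin 4) : Gcd r) ^ (rr (i + 1)))).prod *
      (PresentedGroup.of (1 : Fin 4) : Gcd r) ^ (s n) *
      (PresentedGroup.of (0 : Fin 4) : Gcd r) ^ (rr (n + 1)) ≠ 1 := by
  set φ : Gcd r →* FreeGroup (Fin 2) := PresentedGroup.toGroup (killd_rels r) with hφ
  have hφof : ∀ x : Fin 4, φ (PresentedGroup.of x) = killd x := fun x =>
    PresentedGroup.toGroup.of (killd_rels r)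
  have hφd : φ d = 1 := by
    obtain ⟨w, rfl⟩ := hd
    have : φ.comp (FreeGroup.lift (fun j : Fin 2 =>
        (PresentedGroup.of (⟨j.val + 2, by omega⟩ : Fin 4) : Gcd r))) = 1 := by
      refine FreeGroup.ext_hom _ _ (fun a => ?_)
      simp only [MonoidHom.comp_apply, FreeGroup.lift_apply_of, MonoidHom.one_apply]
      rw [hφof]
      fin_cases a <;> rfl
    rw [← MonoidHom.comp_apply, this, MonoidHom.one_apply]
  intro hcontra
  refine key_free n hn rr s hs hrr ?_
  have h0 : φ (PresentedGroup.of (0 : Fin 4)) = FreeGroup.of (0 : Fin 2) := hφof 0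
  have h1 : φ (PresentedGroup.of (1 : Fin 4)) = FreeGroup.of (1 : Fin 2) := hφof 1
  have := congrArg φ hcontra
  rw [_root_.map_one] at this
  rw [MonoidHom.map_mul, MonoidHom.map_mul, MonoidHom.map_mul, MonoidHom.map_mul,
    map_zpow, map_zpow, map_zpow, hφd, one_mul, h0, h1, map_list_prod, List.map_map] at this
  have hmap : List.map (⇑φ ∘ fun i =>
      (PresentedGroup.of (1 : Fin 4) : Gcd r) ^ (s (i + 1)) *
      (PresentedGroup.of (0 : Fin 4) : Gcd r) ^ (rr (i + 1))) (List.range (n - 1)) =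
      List.map (fun i => (FreeGroup.of (1 : Fin 2)) ^ (s (i + 1)) *
      (FreeGroup.of (0 : Fin 2)) ^ (rr (i + 1))) (List.range (n - 1)) :=
    List.map_congr_left (fun i _ => by
      simp only [Function.comp_apply, MonoidHom.map_mul, map_zpow, h0, h1])
  rw [hmap] at this
  exact this
end

section
/- For every integer r ≥ 1 and every integer n ≥ 0, the element b⁻ⁿa⁻ⁿd₁aⁿbⁿ of G lies in the submonoid of G generated by the two elements d₁, d₂; in particular it lies in the subgroup H of G generated by {b, d₁, d₂}. -/
/-- Generators of `G`: `0 = a`, `1 = b`, `2 = c₁`, `3 = c₂`, `4 = d₁`, `5 = d₂`.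
The relators are `a⁻¹b⁻¹ab C⁻¹`, `b⁻¹cᵢb Cᵢ⁻¹`, `(ab)⁻¹d_j(ab) D_j⁻¹`, and
`cᵢ⁻¹d_jcᵢ D_{ij}⁻¹` for `1 ≤ i,j ≤ 2`, where `C = (c₁c₂)(c₁c₂²)⋯(c₁c₂^r)`,
`Cᵢ = (c₁c₂^{ri+1})⋯(c₁c₂^{ri+r})`, `D_j = (d₁d₂^{rj+1})⋯(d₁d₂^{rj+r})`, and
`D_{ij} = (d₁d₂^{r(2i+j)+1})⋯(d₁d₂^{r(2i+j)+r})`. -/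
def GRels (r : ℕ) : Set (FreeGroup (Fin 6)) :=
  { w | (w = (FreeGroup.of (0 : Fin 6))⁻¹ * (FreeGroup.of (1 : Fin 6))⁻¹ *
            FreeGroup.of (0 : Fin 6) * FreeGroup.of (1 : Fin 6) *
            (wordProg (FreeGroup.of (2 : Fin 6)) (FreeGroup.of (3 : Fin 6)) 0 r)⁻¹) ∨
        (∃ i : Fin 2,
          w = (FreeGroup.of (1 : Fin 6))⁻¹ *
              FreeGroup.of (⟨i.val + 2, by omega⟩ : Fin 6) *
              FreeGroup.of (1 : Fin 6) *
              (wordProg (FreeGroup.of (2 : Fin 6)) (FreeGroup.of (3 : Fin 6))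
                (r * (i.val + 1)) r)⁻¹) ∨
        (∃ j : Fin 2,
          w = (FreeGroup.of (0 : Fin 6) * FreeGroup.of (1 : Fin 6))⁻¹ *
              FreeGroup.of (⟨j.val + 4, by omega⟩ : Fin 6) *
              (FreeGroup.of (0 : Fin 6) * FreeGroup.of (1 : Fin 6)) *
              (wordProg (FreeGroup.of (4 : Fin 6)) (FreeGroup.of (5 : Fin 6))
                (r * (j.val + 1)) r)⁻¹) ∨
        (∃ i j : Fin 2,
          w = (FreeGroup.of (⟨i.val + 2, by omega⟩ : Fin 6))⁻¹ *
              FreeGroup.of (⟨j.val + 4, by omega⟩ : Fin 6) *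
              FreeGroup.of (⟨i.val + 2, by omega⟩ : Fin 6) *
              (wordProg (FreeGroup.of (4 : Fin 6)) (FreeGroup.of (5 : Fin 6))
                (r * (2 * (i.val + 1) + (j.val + 1))) r)⁻¹) }

/-- `G = ⟨a,b,c₁,c₂,d₁,d₂ ∣ a⁻¹b⁻¹ab = C, b⁻¹cᵢb = Cᵢ, (ab)⁻¹d_j(ab) = D_j,
cᵢ⁻¹d_jcᵢ = D_{ij}, 1 ≤ i,j ≤ 2⟩`. -/
abbrev GG (r : ℕ) := PresentedGroup (GRels r)

namespace ConjAux

lemma wordProg_map {G H : Type*} [Group G] [Group H] (φ : G →* H) (x y : G) (s r : ℕ) :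
    φ (wordProg x y s r) = wordProg (φ x) (φ y) s r := by
  rw [wordProg, wordProg, map_list_prod, List.map_map]
  simp [Function.comp_def]

lemma wordProg_mem {G : Type*} [Group G] (x y : G) (s r : ℕ) :
    wordProg x y s r ∈ Submonoid.closure ({x, y} : Set G) := by
  refine Submonoid.list_prod_mem _ ?_
  intro z hz
  simp only [List.mem_map, List.mem_range] at hz
  obtain ⟨k, -, rfl⟩ := hz
  exact mul_mem (Submonoid.subset_closure (by simp))
    (pow_mem (Submonoid.subset_closure (by simp)) _)

/-- conjugation carries a generated submonoid into a submonoid, given it does so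
on generators -/
lemma conj_closure {G : Type*} [Group G] (g : G) (S : Set G) (T : Submonoid G)
    (h : ∀ x ∈ S, g⁻¹ * x * g ∈ T) : ∀ w ∈ Submonoid.closure S, g⁻¹ * w * g ∈ T := by
  intro w hw
  induction hw using Submonoid.closure_induction with
  | mem x hx => exact h x hx
  | one => simpa using T.one_mem
  | mul x y hx hy ihx ihy =>
    have e : g⁻¹ * (x * y) * g = (g⁻¹ * x * g) * (g⁻¹ * y * g) := by group
    rw [e]; exact mul_mem ihx ihy

variable (r : ℕ)

def pa : GG r := PresentedGroup.of 0
def pb : GG r := PresentedGroup.of 1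
def pc1 : GG r := PresentedGroup.of 2
def pc2 : GG r := PresentedGroup.of 3
def pd1 : GG r := PresentedGroup.of 4
def pd2 : GG r := PresentedGroup.of 5
def pcg (i : Fin 2) : GG r := PresentedGroup.of (⟨i.val + 2, by omega⟩ : Fin 6)
def pdg (j : Fin 2) : GG r := PresentedGroup.of (⟨j.val + 4, by omega⟩ : Fin 6)

lemma pcg_zero : pcg r 0 = pc1 r := rfl
lemma pcg_one : pcg r 1 = pc2 r := rfl
lemma pdg_zero : pdg r 0 = pd1 r := rfl
lemma pdg_one : pdg r 1 = pd2 r := rfl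

lemma mk_rel {w : FreeGroup (Fin 6)} (hw : w ∈ GRels r) :
    PresentedGroup.mk (GRels r) w = 1 :=
  (QuotientGroup.eq_one_iff w).mpr (Subgroup.subset_normalClosure hw)

lemma relC : (pa r)⁻¹ * (pb r)⁻¹ * pa r * pb r = wordProg (pc1 r) (pc2 r) 0 r := by
  have h := mk_rel r (Or.inl rfl)
  simp only [map_mul, map_inv, wordProg_map, mul_inv_eq_one] at h
  exact h

lemma relCi (i : Fin 2) :
    (pb r)⁻¹ * pcg r i * pb r = wordProg (pc1 r) (pc2 r) (r * (i.val + 1)) r := by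
  have h := mk_rel r (Or.inr (Or.inl ⟨i, rfl⟩))
  simp only [map_mul, map_inv, wordProg_map, mul_inv_eq_one] at h
  exact h

lemma relDj (j : Fin 2) :
    (pa r * pb r)⁻¹ * pdg r j * (pa r * pb r) =
      wordProg (pd1 r) (pd2 r) (r * (j.val + 1)) r := by
  have h := mk_rel r (Or.inr (Or.inr (Or.inl ⟨j, rfl⟩)))
  simp only [map_mul, map_inv, wordProg_map, mul_inv_eq_one] at h
  exact h

lemma relDij (i j : Fin 2) :
    (pcg r i)⁻¹ * pdg r j * pcg r i =
      wordProg (pd1 r) (pd2 r) (r * (2 * (i.val + 1) + (j.val + 1))) r := by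
  have h := mk_rel r (Or.inr (Or.inr (Or.inr ⟨i, j, rfl⟩)))
  simp only [map_mul, map_inv, wordProg_map, mul_inv_eq_one] at h
  exact h

/-- The submonoid generated by `c₁, c₂`. -/
def Mc : Submonoid (GG r) := Submonoid.closure {pc1 r, pc2 r}
/-- The submonoid generated by `d₁, d₂`. -/
def Md : Submonoid (GG r) := Submonoid.closure {pd1 r, pd2 r}

lemma conj_b_c : ∀ w ∈ Mc r, (pb r)⁻¹ * w * pb r ∈ Mc r := by
  refine conj_closure _ _ _ ?_
  intro x hx
  simp only [Set.mem_insert_iff, Set.mem_singleton_iff] at hx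
  rcases hx with rfl | rfl
  · have h := relCi r 0; rw [pcg_zero] at h; rw [h]; exact wordProg_mem _ _ _ _
  · have h := relCi r 1; rw [pcg_one] at h; rw [h]; exact wordProg_mem _ _ _ _

lemma conj_t_d : ∀ w ∈ Md r, (pa r * pb r)⁻¹ * w * (pa r * pb r) ∈ Md r := by
  refine conj_closure _ _ _ ?_
  intro x hx
  simp only [Set.mem_insert_iff, Set.mem_singleton_iff] at hx
  rcases hx with rfl | rfl
  · have h := relDj r 0; rw [pdg_zero] at h; rw [h]; exact wordProg_mem _ _ _ _
  · have h := relDj r 1; rw [pdg_one] at h; rw [h]; exact wordProg_mem _ _ _ _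

lemma conj_c_d : ∀ p ∈ Mc r, ∀ w ∈ Md r, p⁻¹ * w * p ∈ Md r := by
  intro p hp
  induction hp using Submonoid.closure_induction with
  | mem x hx =>
    simp only [Set.mem_insert_iff, Set.mem_singleton_iff] at hx
    rcases hx with rfl | rfl
    · refine conj_closure _ _ _ ?_
      intro y hy
      simp only [Set.mem_insert_iff, Set.mem_singleton_iff] at hy
      rcases hy with rfl | rfl
      · have h := relDij r 0 0; rw [pcg_zero, pdg_zero] at h; rw [h]
        exact wordProg_mem _ _ _ _
      · have h := relDij r 0 1; rw [pcg_zero, pdg_one] at h; rw [h]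
        exact wordProg_mem _ _ _ _
    · refine conj_closure _ _ _ ?_
      intro y hy
      simp only [Set.mem_insert_iff, Set.mem_singleton_iff] at hy
      rcases hy with rfl | rfl
      · have h := relDij r 1 0; rw [pcg_one, pdg_zero] at h; rw [h]
        exact wordProg_mem _ _ _ _
      · have h := relDij r 1 1; rw [pcg_one, pdg_one] at h; rw [h]
        exact wordProg_mem _ _ _ _
  | one => intro w hw; simpa using hw
  | mul x y hx hy ihx ihy =>
    intro w hw
    have e : (x * y)⁻¹ * w * (x * y) = y⁻¹ * (x⁻¹ * w * x) * y := by group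
    rw [e]; exact ihy _ (ihx w hw)

lemma key_tb (k : ℕ) :
    ∃ P ∈ Mc r, ((pb r) ^ k)⁻¹ * (pa r * pb r) * (pb r) ^ k = (pa r * pb r) * P := by
  induction k with
  | zero => exact ⟨1, one_mem _, by simp⟩
  | succ k ih =>
    obtain ⟨P, hP, hEq⟩ := ih
    have hbab : (pb r)⁻¹ * pa r * pb r = pa r * wordProg (pc1 r) (pc2 r) 0 r := by
      rw [← relC]; group
    refine ⟨((pb r)⁻¹ * wordProg (pc1 r) (pc2 r) 0 r * pb r) * ((pb r)⁻¹ * P * pb r),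
      mul_mem (conj_b_c r _ (wordProg_mem _ _ _ _)) (conj_b_c r _ hP), ?_⟩
    have h1 : ((pb r) ^ (k + 1))⁻¹ * (pa r * pb r) * (pb r) ^ (k + 1) =
        (pb r)⁻¹ * (((pb r) ^ k)⁻¹ * (pa r * pb r) * (pb r) ^ k) * pb r := by
      rw [pow_succ]; group
    rw [h1, hEq]
    have h2 : (pb r)⁻¹ * (pa r * pb r * P) * pb r =
        ((pb r)⁻¹ * pa r * pb r) * pb r * ((pb r)⁻¹ * P * pb r) := by group
    rw [h2, hbab]
    group

lemma main (n : ℕ) :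
    ((pb r) ^ n)⁻¹ * ((pa r) ^ n)⁻¹ * pd1 r * (pa r) ^ n * (pb r) ^ n ∈ Md r := by
  induction n with
  | zero => simpa [Md] using Submonoid.subset_closure (Set.mem_insert _ _)
  | succ n ih =>
    obtain ⟨P, hP, htb⟩ := key_tb r n
    have gid : ∀ A B x y d : GG r,
        (y * B)⁻¹ * (A * x)⁻¹ * d * (A * x) * (y * B) =
          (B⁻¹ * (x * y) * B)⁻¹ * (B⁻¹ * A⁻¹ * d * A * B) * (B⁻¹ * (x * y) * B) := by
      intros; group
    rw [pow_succ (pa r), pow_succ' (pb r), gid, htb]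
    have e : (pa r * pb r * P)⁻¹ *
          (((pb r) ^ n)⁻¹ * ((pa r) ^ n)⁻¹ * pd1 r * (pa r) ^ n * (pb r) ^ n) *
          (pa r * pb r * P) =
        P⁻¹ * ((pa r * pb r)⁻¹ *
          (((pb r) ^ n)⁻¹ * ((pa r) ^ n)⁻¹ * pd1 r * (pa r) ^ n * (pb r) ^ n) *
          (pa r * pb r)) * P := by group
    rw [e]
    exact conj_c_d r P hP _ (conj_t_d r _ ih)

end ConjAux

/-- For every `r ≥ 1` and `n ≥ 0`, the element `b⁻ⁿa⁻ⁿd₁aⁿbⁿ` of `G` lies in the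
submonoid of `G` generated by `d₁, d₂`; in particular it lies in the subgroup
`H = ⟨b, d₁, d₂⟩` of `G`. -/
theorem conjugated_d1_positive_word (r : ℕ) (hr : 1 ≤ r) (n : ℕ) :
    ((PresentedGroup.of (1 : Fin 6) : GG r) ^ n)⁻¹ *
        ((PresentedGroup.of (0 : Fin 6) : GG r) ^ n)⁻¹ *
        PresentedGroup.of (4 : Fin 6) *
        PresentedGroup.of (0 : Fin 6) ^ n * PresentedGroup.of (1 : Fin 6) ^ n ∈
      Submonoid.closure
        ({(PresentedGroup.of (4 : Fin 6) : GG r), PresentedGroup.of (5 : Fin 6)} :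
          Set (GG r)) ∧
    ((PresentedGroup.of (1 : Fin 6) : GG r) ^ n)⁻¹ *
        ((PresentedGroup.of (0 : Fin 6) : GG r) ^ n)⁻¹ *
        PresentedGroup.of (4 : Fin 6) *
        PresentedGroup.of (0 : Fin 6) ^ n * PresentedGroup.of (1 : Fin 6) ^ n ∈
      Subgroup.closure
        ({(PresentedGroup.of (1 : Fin 6) : GG r), PresentedGroup.of (4 : Fin 6),
          PresentedGroup.of (5 : Fin 6)} : Set (GG r)) := by
  have h1 := ConjAux.main r n
  refine ⟨h1, ?_⟩
  have hle : ConjAux.Md r ≤ (Subgroup.closure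
      ({(PresentedGroup.of (1 : Fin 6) : GG r), PresentedGroup.of (4 : Fin 6),
        PresentedGroup.of (5 : Fin 6)} : Set (GG r))).toSubmonoid := by
    rw [ConjAux.Md, Submonoid.closure_le]
    rintro x (rfl | rfl)
    · exact Subgroup.subset_closure (by simp [ConjAux.pd1])
    · exact Subgroup.subset_closure (by simp [ConjAux.pd2])
  exact hle h1
end

section
/- For every integer r ≥ 1, in the group G, every integer k with c₁ᵏ ∈ H satisfies k = 0, where H is the subgroup of G generated by {b, d₁, d₂}; in particular c₁ has infinite order in G and the cosets Hc₁ⁱ for i = 0, 1, 2, … are pairwise distinct. -/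
namespace C1Aux

/-- translation permutation -/
def tr (v : ℚ × ℚ) : Equiv.Perm (ℚ × ℚ) := Equiv.addRight v

@[simp] lemma tr_apply (v p : ℚ × ℚ) : tr v p = p + v := rfl

lemma tr_mul (v w : ℚ × ℚ) : tr v * tr w = tr (w + v) := by
  apply Equiv.ext; intro p
  rw [Equiv.Perm.mul_apply]
  simp [add_assoc]

@[simp] lemma tr_zero : tr 0 = 1 := by
  apply Equiv.ext; intro p
  simp

lemma tr_inv (v : ℚ × ℚ) : (tr v)⁻¹ = tr (-v) := by
  rw [inv_eq_iff_mul_eq_one, tr_mul]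
  simp

lemma tr_pow (v : ℚ × ℚ) (n : ℕ) : tr v ^ n = tr (n • v) := by
  induction n with
  | zero => simp
  | succ n ih => rw [pow_succ, ih, tr_mul, succ_nsmul]; ring_nf

lemma tr_zpow (v : ℚ × ℚ) (k : ℤ) : tr v ^ k = tr (k • v) := by
  cases k with
  | ofNat n => rw [Int.ofNat_eq_coe, zpow_natCast, tr_pow, natCast_zsmul]
  | negSucc n => rw [zpow_negSucc, tr_pow, tr_inv, negSucc_zsmul]

lemma map_wordProg {G H : Type*} [Group G] [Group H] (f : G →* H) (x y : G) (s r : ℕ) :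
    f (wordProg x y s r) = wordProg (f x) (f y) s r := by
  unfold wordProg
  rw [map_list_prod, List.map_map]
  congr 1
  ext k
  simp

lemma wordProg_one {G : Type*} [Group G] (s r : ℕ) : wordProg (1 : G) 1 s r = 1 := by
  unfold wordProg
  apply List.prod_eq_one
  intro x hx
  simp only [List.mem_map] at hx
  obtain ⟨k, -, rfl⟩ := hx
  simp

lemma wordProg_tr (v w : ℚ × ℚ) (s r : ℕ) :
    wordProg (tr v) (tr w) s r
      = tr (r • v + (∑ k ∈ Finset.range r, (s + k + 1)) • w) := by
  induction r with
  | zero => simp [wordProg]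
  | succ n ih =>
      rw [wordProg, List.range_succ, List.map_append, List.prod_append]
      have h1 : ((List.range n).map (fun k => tr v * tr w ^ (s + k + 1))).prod
          = wordProg (tr v) (tr w) s n := rfl
      rw [h1, ih]
      simp only [List.map_cons, List.map_nil, List.prod_cons, List.prod_nil, mul_one]
      rw [tr_pow, tr_mul, tr_mul, Finset.sum_range_succ, succ_nsmul]
      congr 1
      module


/-! ### The concrete affine representation -/

def tnat (r : ℕ) : ℕ := ∑ k ∈ Finset.range r, (k + 1)

lemma sum_exp (r s : ℕ) : ∑ k ∈ Finset.range r, (s + k + 1) = r * s + tnat r := by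
  unfold tnat
  have : ∀ k, s + k + 1 = s + (k + 1) := by intro k; ring
  simp only [this, Finset.sum_add_distrib, Finset.sum_const, Finset.card_range, smul_eq_mul,
    mul_comm]

lemma two_tnat (r : ℕ) : 2 * tnat r = r * (r + 1) := by
  unfold tnat
  induction r with
  | zero => simp
  | succ n ih => rw [Finset.sum_range_succ, Nat.mul_add, ih]; ring

noncomputable def aq (r : ℕ) : ℚ := r
noncomputable def tq (r : ℕ) : ℚ := tnat r
noncomputable def cq (r : ℕ) : ℚ := aq r ^ 2 + tq r
noncomputable def dq (r : ℕ) : ℚ := 2 * aq r ^ 2 + tq r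
noncomputable def dlt (r : ℕ) : ℚ := (aq r - 1) * (dq r - 1) - aq r * cq r

lemma aq_ne {r : ℕ} (hr : 1 ≤ r) : aq r ≠ 0 := by
  unfold aq
  have : 0 < r := hr
  exact_mod_cast this.ne'

lemma two_tq (r : ℕ) : 2 * tq r = aq r * (aq r + 1) := by
  unfold tq aq
  have h := two_tnat r
  have h2 : ((2 * tnat r : ℕ) : ℚ) = ((r * (r + 1) : ℕ) : ℚ) := by rw [h]
  push_cast at h2
  linarith [h2]

lemma dlt_ne {r : ℕ} (hr : 1 ≤ r) : dlt r ≠ 0 := by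
  have h2 : 2 * dlt r = 2 * aq r ^ 3 - 5 * aq r ^ 2 - 3 * aq r + 2 := by
    simp only [dlt, cq, dq]
    linear_combination (-1 : ℚ) * two_tq r
  have hint : (2 * (r : ℤ) ^ 3 - 5 * (r : ℤ) ^ 2 - 3 * r + 2) ≠ 0 := by
    rcases Nat.lt_or_ge r 3 with h | h
    · interval_cases r <;> decide
    · have h3 : (3 : ℤ) ≤ (r : ℤ) := by exact_mod_cast h
      nlinarith [h3, sq_nonneg ((r : ℤ) - 3)]
  intro h0
  apply hint
  have : 2 * dlt r = 0 := by rw [h0]; ring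
  rw [h2] at this
  have : ((2 * (r : ℤ) ^ 3 - 5 * (r : ℤ) ^ 2 - 3 * r + 2 : ℤ) : ℚ) = 0 := by
    push_cast
    rw [← this]
    unfold aq
    ring
  exact_mod_cast this


noncomputable def Mapp (r : ℕ) (p : ℚ × ℚ) : ℚ × ℚ :=
  (aq r * p.1 + aq r * p.2, cq r * p.1 + dq r * p.2)

noncomputable def Minv (r : ℕ) (p : ℚ × ℚ) : ℚ × ℚ :=
  ((dq r * p.1 - aq r * p.2) / aq r ^ 3, (-(cq r) * p.1 + aq r * p.2) / aq r ^ 3)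

lemma Mapp_Minv {r : ℕ} (hr : 1 ≤ r) (p : ℚ × ℚ) : Mapp r (Minv r p) = p := by
  have ha := aq_ne hr
  simp only [Mapp, Minv, cq, dq]
  refine Prod.ext ?_ ?_ <;> (show _ = _) <;> field_simp <;> ring

lemma Minv_Mapp {r : ℕ} (hr : 1 ≤ r) (p : ℚ × ℚ) : Minv r (Mapp r p) = p := by
  have ha := aq_ne hr
  simp only [Mapp, Minv, cq, dq]
  refine Prod.ext ?_ ?_ <;> (show _ = _) <;> field_simp <;> ring

noncomputable def beta (r : ℕ) (hr : 1 ≤ r) : Equiv.Perm (ℚ × ℚ) where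
  toFun := Minv r
  invFun := Mapp r
  left_inv := Mapp_Minv hr
  right_inv := Minv_Mapp hr

@[simp] lemma beta_apply {r : ℕ} (hr : 1 ≤ r) (p : ℚ × ℚ) : beta r hr p = Minv r p := rfl

@[simp] lemma beta_inv_apply {r : ℕ} (hr : 1 ≤ r) (p : ℚ × ℚ) : (beta r hr)⁻¹ p = Mapp r p := rfl

noncomputable def uvec (r : ℕ) : ℚ × ℚ :=
  ((aq r * (dq r - 1) - aq r * tq r) / dlt r, ((aq r - 1) * tq r - cq r * aq r) / dlt r)

lemma Mapp_add (r : ℕ) (p q : ℚ × ℚ) : Mapp r (p + q) = Mapp r p + Mapp r q := by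
  simp only [Mapp]
  refine Prod.ext ?_ ?_ <;> (show _ = _) <;> simp <;> ring

lemma Mapp_uvec {r : ℕ} (hr : 1 ≤ r) : Mapp r (uvec r) - uvec r = (aq r, tq r) := by
  have hd := dlt_ne hr
  simp only [Mapp, uvec]
  refine Prod.ext ?_ ?_ <;> (show _ = _) <;> simp only [Prod.fst_sub, Prod.snd_sub] <;>
    field_simp <;> (unfold dlt; ring)

lemma Mapp_e1 (r : ℕ) : Mapp r ((1 : ℚ), (0 : ℚ)) = (aq r, cq r) := by
  simp [Mapp]

lemma Mapp_e2 (r : ℕ) : Mapp r ((0 : ℚ), (1 : ℚ)) = (aq r, dq r) := by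
  simp [Mapp]

noncomputable def fgen (r : ℕ) (hr : 1 ≤ r) : Fin 6 → Equiv.Perm (ℚ × ℚ) :=
  ![tr (uvec r), beta r hr, tr (1, 0), tr (0, 1), 1, 1]


section Rels

variable {r : ℕ} (hr : 1 ≤ r)

lemma fgen0 : fgen r hr 0 = tr (uvec r) := rfl
lemma fgen1 : fgen r hr 1 = beta r hr := rfl
lemma fgen2 : fgen r hr 2 = tr (1, 0) := rfl
lemma fgen3 : fgen r hr 3 = tr (0, 1) := rfl
lemma fgen4 : fgen r hr 4 = 1 := rfl
lemma fgen5 : fgen r hr 5 = 1 := rfl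
lemma fgen2' (h : 0 + 2 < 6) : fgen r hr ⟨0 + 2, h⟩ = tr (1, 0) := rfl
lemma fgen3' (h : 1 + 2 < 6) : fgen r hr ⟨1 + 2, h⟩ = tr (0, 1) := rfl
lemma fgen4' (h : 0 + 4 < 6) : fgen r hr ⟨0 + 4, h⟩ = 1 := rfl
lemma fgen5' (h : 1 + 4 < 6) : fgen r hr ⟨1 + 4, h⟩ = 1 := rfl

lemma vec_eval (m n : ℕ) :
    (m • ((1 : ℚ), (0 : ℚ)) + n • ((0 : ℚ), (1 : ℚ))) = ((m : ℚ), (n : ℚ)) := by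
  refine Prod.ext ?_ ?_ <;> simp

lemma rels_hold : ∀ w ∈ GRels r, FreeGroup.lift (fgen r hr) w = 1 := by
  intro w hw
  rcases hw with h | ⟨i, h⟩ | ⟨j, h⟩ | ⟨i, j, h⟩
  · subst h
    simp only [map_mul, map_inv, FreeGroup.lift_apply_of, map_wordProg,
      fgen0 hr, fgen1 hr, fgen2 hr, fgen3 hr]
    rw [wordProg_tr, sum_exp, vec_eval, mul_inv_eq_one, tr_inv]
    apply Equiv.ext; intro p
    simp only [Equiv.Perm.mul_apply, tr_apply, beta_apply, beta_inv_apply]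
    rw [Mapp_add, Mapp_Minv hr]
    have h1 := Mapp_uvec hr
    have h2 : Mapp r (uvec r) = (aq r, tq r) + uvec r := by
      rw [← h1]; abel
    rw [h2]
    have h3 : ((r * 0 + tnat r : ℕ) : ℚ) = tq r := by
      push_cast [tq]; ring
    rw [h3]
    have h4 : ((r : ℕ) : ℚ) = aq r := rfl
    rw [h4]
    abel
  · subst h
    fin_cases i <;>
    · simp only [Fin.isValue, Fin.val_zero, Fin.val_one, map_mul, map_inv, FreeGroup.lift_apply_of,
        map_wordProg, fgen1 hr, fgen2 hr, fgen3 hr, fgen2' hr, fgen3' hr]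
      rw [wordProg_tr, sum_exp, vec_eval, mul_inv_eq_one]
      apply Equiv.ext; intro p
      simp only [Equiv.Perm.mul_apply, tr_apply, beta_apply, beta_inv_apply]
      rw [Mapp_add, Mapp_Minv hr]
      refine Prod.ext ?_ ?_ <;>
        simp [Mapp, aq, cq, dq, tq, sum_exp, tnat] <;> push_cast <;> ring
  · subst h
    fin_cases j <;>
    · simp only [Fin.isValue, Fin.val_zero, Fin.val_one, map_mul, map_inv, FreeGroup.lift_apply_of,
        map_wordProg, fgen0 hr, fgen1 hr, fgen4 hr, fgen5 hr, fgen4' hr, fgen5' hr]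
      rw [wordProg_one]
      group
  · subst h
    fin_cases i <;> fin_cases j <;>
    · simp only [Fin.isValue, Fin.val_zero, Fin.val_one, map_mul, map_inv, FreeGroup.lift_apply_of,
        map_wordProg, fgen2 hr, fgen3 hr, fgen4 hr, fgen5 hr, fgen2' hr, fgen3' hr,
        fgen4' hr, fgen5' hr]
      rw [wordProg_one]
      group

end Rels

end C1Aux

open Pointwise in
/-- For every `r ≥ 1`, in the group `G`, the only integer `k` with `c₁ᵏ ∈ H` is
`k = 0`, where `H = ⟨b, d₁, d₂⟩`; in particular `c₁` has infinite order in `G`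
and the right cosets `H·c₁ⁱ` for `i = 0, 1, 2, …` are pairwise distinct. -/
theorem c1_powers_meet_H_trivially (r : ℕ) (hr : 1 ≤ r) :
    (∀ k : ℤ, (PresentedGroup.of (2 : Fin 6) : GG r) ^ k ∈
        Subgroup.closure ({(PresentedGroup.of (1 : Fin 6) : GG r),
          PresentedGroup.of (4 : Fin 6), PresentedGroup.of (5 : Fin 6)} : Set (GG r)) →
      k = 0) ∧
    ¬ IsOfFinOrder (PresentedGroup.of (2 : Fin 6) : GG r) ∧
    (∀ i j : ℕ, i ≠ j →
      (Subgroup.closure ({(PresentedGroup.of (1 : Fin 6) : GG r),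
          PresentedGroup.of (4 : Fin 6), PresentedGroup.of (5 : Fin 6)} : Set (GG r)) :
        Set (GG r)) * {(PresentedGroup.of (2 : Fin 6) : GG r) ^ i} ≠
      (Subgroup.closure ({(PresentedGroup.of (1 : Fin 6) : GG r),
          PresentedGroup.of (4 : Fin 6), PresentedGroup.of (5 : Fin 6)} : Set (GG r)) :
        Set (GG r)) * {(PresentedGroup.of (2 : Fin 6) : GG r) ^ j}) := by
  classical
  set S : Set (GG r) := {(PresentedGroup.of (1 : Fin 6) : GG r),
      PresentedGroup.of (4 : Fin 6), PresentedGroup.of (5 : Fin 6)} with hS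
  set c : GG r := PresentedGroup.of (2 : Fin 6) with hc
  set ψ : GG r →* Equiv.Perm (ℚ × ℚ) := PresentedGroup.toGroup (C1Aux.rels_hold hr) with hψ
  have hψ1 : ψ (PresentedGroup.of (1 : Fin 6)) = C1Aux.beta r hr :=
    PresentedGroup.toGroup.of _
  have hψ2 : ψ c = C1Aux.tr (1, 0) := PresentedGroup.toGroup.of _
  have hψ4 : ψ (PresentedGroup.of (4 : Fin 6)) = 1 := PresentedGroup.toGroup.of _
  have hψ5 : ψ (PresentedGroup.of (5 : Fin 6)) = 1 := PresentedGroup.toGroup.of _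
  have key : ∀ k : ℤ, c ^ k ∈ Subgroup.closure S → k = 0 := by
    intro k hk
    have hmem : ψ (c ^ k) ∈ (Subgroup.closure S).map ψ := ⟨_, hk, rfl⟩
    rw [MonoidHom.map_closure] at hmem
    have hsub : Subgroup.closure (ψ '' S) ≤
        MulAction.stabilizer (Equiv.Perm (ℚ × ℚ)) (((0 : ℚ), (0 : ℚ))) := by
      rw [Subgroup.closure_le]
      rintro x ⟨y, hy, rfl⟩
      simp only [hS, Set.mem_insert_iff, Set.mem_singleton_iff] at hy
      have hb : C1Aux.beta r hr ∈
          MulAction.stabilizer (Equiv.Perm (ℚ × ℚ)) (((0 : ℚ), (0 : ℚ))) := by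
        rw [MulAction.mem_stabilizer_iff, Equiv.Perm.smul_def, C1Aux.beta_apply]
        simp [C1Aux.Minv]
      rcases hy with rfl | rfl | rfl
      · rw [hψ1]; exact hb
      · rw [hψ4]; exact one_mem _
      · rw [hψ5]; exact one_mem _
    have hst := hsub hmem
    rw [MulAction.mem_stabilizer_iff, Equiv.Perm.smul_def, map_zpow, hψ2,
      C1Aux.tr_zpow, C1Aux.tr_apply] at hst
    have hfst := congrArg Prod.fst hst
    simp only [Prod.fst_add, Prod.smul_fst, smul_eq_mul] at hfst
    have : (k : ℚ) = 0 := by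
      simpa using hfst
    exact_mod_cast this
  refine ⟨key, ?_, ?_⟩
  · intro hfin
    obtain ⟨n, hn, hpow⟩ := isOfFinOrder_iff_pow_eq_one.mp hfin
    have h0 := key n (by rw [zpow_natCast, hpow]; exact one_mem _)
    omega
  · intro i j hij heq
    have h1 : c ^ i ∈ (Subgroup.closure S : Set (GG r)) * {c ^ i} :=
      Set.mem_mul.mpr ⟨1, one_mem _, c ^ i, rfl, one_mul _⟩
    rw [heq] at h1
    obtain ⟨h, hh, y, hy, hmul⟩ := Set.mem_mul.mp h1
    rw [Set.mem_singleton_iff] at hy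
    subst hy
    have hmem2 : c ^ ((i : ℤ) - (j : ℤ)) ∈ Subgroup.closure S := by
      have he : c ^ ((i : ℤ) - (j : ℤ)) = h := by
        rw [zpow_sub, zpow_natCast, zpow_natCast, ← hmul]
        group
      rw [he]; exact hh
    have := key _ hmem2
    omega
end
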